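/- arXiv:1203.1640 — 6 statements merged into one kernel-verified Lean document; each statement's English description precedes it below -/
import Mathlib

section
/- For integers p ≥ 0 and q > 0 with q not divisible by n+1, writing q = (n+1)r + s with 1 ≤ s ≤ n, the full unfolding of the generator δ^((n+1)^p · q) under the relations δ^((n+1)k+ℓ) ↦ Σ_{j=1}^{n+1}(kδ + α_{j-1}^(ℓ)) (1 ≤ ℓ ≤ n) and δ^((n+1)k) ↦ δ^(k) + Σ_{j=1}^n (kδ_j) equals Σ_{j=1}^{n+1} (rδ + α_{j-1}^(s)) + Σ_{i=0}^{p-1} Σ_{j=1}^n ((n+1)^i q · δ_j). In particular, this unfolded expression has exactly n + 1 + np parts. -/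
/-- Generators for Kostant partition expressions in type A_n^(1):
`imag j m` is the part (m δ_j); `real c i ℓ` is the part (c δ + α_i^(ℓ));
`dsym m` is the formal symbol δ^(m). -/
inductive Gen (n : ℕ) : Type
  | imag : Fin n → ℕ → Gen n
  | real : ℕ → Fin (n+1) → ℕ → Gen n
  | dsym : ℕ → Gen n
  deriving DecidableEq

/-- Full unfolding of the symbol δ^(m) under the defining relations. -/
def unfoldDelta (n : ℕ) : ℕ → Multiset (Gen n)
  | 0 => 0
  | (m+1) =>
    if h0 : n = 0 then 0
    else if (m+1) % (n+1) = 0 then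
      unfoldDelta n ((m+1)/(n+1)) +
        Multiset.map (fun j : Fin n => Gen.imag j ((m+1)/(n+1))) Finset.univ.val
    else
      Multiset.map (fun j : Fin (n+1) => Gen.real ((m+1)/(n+1)) j ((m+1) % (n+1)))
        Finset.univ.val
  decreasing_by exact Nat.div_lt_self (Nat.succ_pos m) (by omega)

lemma unfoldDelta_pos (n m : ℕ) (hn : n ≠ 0) (hm : 0 < m) :
    unfoldDelta n m =
      if m % (n+1) = 0 then
        unfoldDelta n (m/(n+1)) +
          Multiset.map (fun j : Fin n => Gen.imag j (m/(n+1))) Finset.univ.val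
      else
        Multiset.map (fun j : Fin (n+1) => Gen.real (m/(n+1)) j (m % (n+1)))
          Finset.univ.val := by
  obtain ⟨k, rfl⟩ := Nat.exists_eq_add_of_lt hm
  rw [unfoldDelta]
  simp [hn, Nat.add_comm]

/-- Lemma 3.5: for p ≥ 0 and q > 0 with (n+1) ∤ q, writing q = (n+1)r + s, 1 ≤ s ≤ n,
the full unfolding of δ^((n+1)^p q) is
Σ_{j=1}^{n+1} (rδ + α_{j-1}^(s)) + Σ_{i=0}^{p-1} Σ_{j=1}^n ((n+1)^i q δ_j);
in particular it has exactly n + 1 + np parts. -/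
theorem unfoldDelta_eq (n p q : ℕ) (hn : 1 ≤ n) (hq : 0 < q) (hnd : ¬ (n+1) ∣ q) :
    unfoldDelta n ((n+1)^p * q) =
      Multiset.map (fun j : Fin (n+1) => Gen.real (q/(n+1)) j (q % (n+1))) Finset.univ.val
        + ∑ i ∈ Finset.range p,
            Multiset.map (fun j : Fin n => Gen.imag j ((n+1)^i * q)) Finset.univ.val ∧
    Multiset.card (unfoldDelta n ((n+1)^p * q)) = n + 1 + n * p := by
  have hn0 : n ≠ 0 := by omega
  have hmod : q % (n+1) ≠ 0 := fun h => hnd (Nat.dvd_of_mod_eq_zero h)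
  have key : ∀ p, unfoldDelta n ((n+1)^p * q) =
      Multiset.map (fun j : Fin (n+1) => Gen.real (q/(n+1)) j (q % (n+1))) Finset.univ.val
        + ∑ i ∈ Finset.range p,
            Multiset.map (fun j : Fin n => Gen.imag j ((n+1)^i * q)) Finset.univ.val := by
    intro p
    induction p with
    | zero =>
      simp only [pow_zero, one_mul, Finset.range_zero, Finset.sum_empty, add_zero]
      rw [unfoldDelta_pos n q hn0 hq, if_neg hmod]
    | succ p ih =>
      have hpos : 0 < (n+1)^(p+1) * q :=
        Nat.mul_pos (Nat.pow_pos (by omega)) hq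
      have hdvd : ((n+1)^(p+1) * q) % (n+1) = 0 := by
        apply Nat.mod_eq_zero_of_dvd
        exact Dvd.dvd.mul_right (dvd_pow_self (n+1) (Nat.succ_ne_zero p)) q
      have hdiv : ((n+1)^(p+1) * q) / (n+1) = (n+1)^p * q := by
        rw [pow_succ, mul_comm ((n+1)^p) (n+1), mul_assoc,
          Nat.mul_div_cancel_left _ (by omega : 0 < n+1)]
      rw [unfoldDelta_pos n _ hn0 hpos, if_pos hdvd, hdiv, ih,
        Finset.sum_range_succ, add_assoc]
  refine ⟨key p, ?_⟩
  rw [key p]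
  simp [Nat.mul_comm]
end

section
/- The reduction map ψ from the set K of Kostant partitions (nonnegative integer combinations of the generators in S_1) to the set K(∞) of reduced expressions is a bijection, with inverse the unfolding map φ. Equivalently, every element of K(∞) unfolds to a unique element of K and every element of K reduces to a unique reduced expression. -/
/-- The unfolding map φ on expressions: expand every δ^(m) symbol. -/
def unfoldExpr (n : ℕ) (e : Multiset (Gen n)) : Multiset (Gen n) :=
  e.bind (fun g => match g with
    | Gen.dsym m => unfoldDelta n m
    | g => {g})

def ValidGen (n : ℕ) : Gen n → Prop
  | Gen.imag _ m => 0 < m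
  | Gen.real _ _ ℓ => 1 ≤ ℓ ∧ ℓ ≤ n
  | Gen.dsym m => 0 < m

def IsDsym {n : ℕ} : Gen n → Prop
  | Gen.dsym _ => True
  | _ => False

/-- Membership in K: a Z_{≥0}-combination of the generators in S_1. -/
def IsK (n : ℕ) (e : Multiset (Gen n)) : Prop :=
  ∀ g ∈ e, ValidGen n g ∧ ¬ IsDsym g

/-- The expression contains parts that can be replaced by some δ^(k). -/
def HasRemovableDeltaExpr (n : ℕ) (e : Multiset (Gen n)) : Prop :=
  ∃ k : ℕ, 0 < k ∧
    ((¬ (n+1) ∣ k ∧ ∀ i : Fin (n+1), Gen.real (k/(n+1)) i (k % (n+1)) ∈ e) ∨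
     ((n+1) ∣ k ∧ Gen.dsym (k/(n+1)) ∈ e ∧ ∀ j : Fin n, Gen.imag j (k/(n+1)) ∈ e))

/-- Membership in K(∞): reduced expressions. -/
def IsKinf (n : ℕ) (e : Multiset (Gen n)) : Prop :=
  (∀ g ∈ e, ValidGen n g) ∧ ¬ HasRemovableDeltaExpr n e

section Aux
variable {n : ℕ}

lemma unfoldDelta_zero : unfoldDelta n 0 = 0 := by rw [unfoldDelta]

lemma unfoldDelta_dvd (hn : 1 ≤ n) {M : ℕ} (hM : 0 < M) (hd : (n+1) ∣ M) :
    unfoldDelta n M = unfoldDelta n (M/(n+1)) +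
      Multiset.map (fun j : Fin n => Gen.imag j (M/(n+1))) Finset.univ.val := by
  obtain ⟨m, rfl⟩ : ∃ m, M = m + 1 := ⟨M - 1, by omega⟩
  rw [unfoldDelta, dif_neg (by omega), if_pos (Nat.mod_eq_zero_of_dvd hd)]

lemma unfoldDelta_not_dvd (hn : 1 ≤ n) {M : ℕ} (hM : 0 < M) (hd : ¬ (n+1) ∣ M) :
    unfoldDelta n M = Multiset.map (fun j : Fin (n+1) =>
      Gen.real (M/(n+1)) j (M % (n+1))) Finset.univ.val := by
  obtain ⟨m, rfl⟩ : ∃ m, M = m + 1 := ⟨M - 1, by omega⟩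
  rw [unfoldDelta, dif_neg (by omega), if_neg (fun h => hd (Nat.dvd_of_mod_eq_zero h))]

lemma valid_unfoldDelta (hn : 1 ≤ n) :
    ∀ m, ∀ g ∈ unfoldDelta n m, ValidGen n g ∧ ¬ IsDsym g := by
  intro m
  induction m using Nat.strong_induction_on with
  | _ m ih =>
    intro g hg
    rcases Nat.eq_zero_or_pos m with rfl | hm
    · rw [unfoldDelta_zero] at hg; simp at hg
    by_cases hd : (n+1) ∣ m
    · rw [unfoldDelta_dvd hn hm hd] at hg
      rcases Multiset.mem_add.1 hg with h | h
      · exact ih _ (Nat.div_lt_self hm (by omega)) g h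
      · obtain ⟨j, _, rfl⟩ := Multiset.mem_map.1 h
        have : 0 < m / (n+1) := Nat.div_pos (Nat.le_of_dvd hm hd) (by omega)
        exact ⟨this, fun h => h⟩
    · rw [unfoldDelta_not_dvd hn hm hd] at hg
      obtain ⟨j, _, rfl⟩ := Multiset.mem_map.1 hg
      have h1 : m % (n+1) ≠ 0 := fun h => hd (Nat.dvd_of_mod_eq_zero h)
      have h2 : m % (n+1) < n + 1 := Nat.mod_lt _ (by omega)
      exact ⟨⟨by omega, by omega⟩, fun h => h⟩


lemma imag_mem_unfoldDelta (hn : 1 ≤ n) {j : Fin n} {q : ℕ} :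
    ∀ m, Gen.imag j q ∈ unfoldDelta n m → ∃ s, 1 ≤ s ∧ m = q * (n+1)^s := by
  intro m
  induction m using Nat.strong_induction_on with
  | _ m ih =>
    intro hg
    rcases Nat.eq_zero_or_pos m with rfl | hm
    · rw [unfoldDelta_zero] at hg; simp at hg
    by_cases hd : (n+1) ∣ m
    · rw [unfoldDelta_dvd hn hm hd] at hg
      have hmd : m = (m / (n+1)) * (n+1) := (Nat.div_mul_cancel hd).symm
      rcases Multiset.mem_add.1 hg with h | h
      · obtain ⟨s, hs1, hs2⟩ := ih _ (Nat.div_lt_self hm (by omega)) h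
        exact ⟨s + 1, by omega, by rw [pow_succ, ← mul_assoc, ← hs2, ← hmd]⟩
      · obtain ⟨j', _, he⟩ := Multiset.mem_map.1 h
        cases he
        exact ⟨1, le_refl 1, by rw [pow_one]; exact hmd⟩
    · rw [unfoldDelta_not_dvd hn hm hd] at hg
      obtain ⟨j', _, he⟩ := Multiset.mem_map.1 hg
      exact absurd he (by simp)

lemma imag_mem_unfoldDelta_of (hn : 1 ≤ n) {j : Fin n} {q : ℕ} (hq : 0 < q) :
    ∀ s, 1 ≤ s → Gen.imag j q ∈ unfoldDelta n (q * (n+1)^s) := by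
  intro s
  induction s with
  | zero => omega
  | succ s ihs =>
    intro _
    have hM : 0 < q * (n+1)^(s+1) := by positivity
    have hd : (n+1) ∣ q * (n+1)^(s+1) := ⟨q * (n+1)^s, by ring⟩
    have hdiv : q * (n+1)^(s+1) / (n+1) = q * (n+1)^s := by
      rw [pow_succ, ← mul_assoc, Nat.mul_div_cancel _ (by omega)]
    rw [unfoldDelta_dvd hn hM hd, hdiv]
    rcases Nat.eq_zero_or_pos s with rfl | hs
    · exact Multiset.mem_add.2 (Or.inr (Multiset.mem_map.2
        ⟨j, Finset.mem_univ j, by rw [pow_zero, mul_one]⟩))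
    · exact Multiset.mem_add.2 (Or.inl (ihs hs))

lemma real_mem_unfoldDelta (hn : 1 ≤ n) {c ℓ : ℕ} {i : Fin (n+1)} :
    ∀ m, Gen.real c i ℓ ∈ unfoldDelta n m →
      (∃ t, m = ((n+1)*c + ℓ) * (n+1)^t) ∧ 0 < ℓ ∧ ℓ ≤ n := by
  intro m
  induction m using Nat.strong_induction_on with
  | _ m ih =>
    intro hg
    rcases Nat.eq_zero_or_pos m with rfl | hm
    · rw [unfoldDelta_zero] at hg; simp at hg
    by_cases hd : (n+1) ∣ m
    · rw [unfoldDelta_dvd hn hm hd] at hg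
      have hmd : m = (m / (n+1)) * (n+1) := (Nat.div_mul_cancel hd).symm
      rcases Multiset.mem_add.1 hg with h | h
      · obtain ⟨⟨t, ht⟩, h1, h2⟩ := ih _ (Nat.div_lt_self hm (by omega)) h
        exact ⟨⟨t + 1, by rw [pow_succ, ← mul_assoc, ← ht, ← hmd]⟩, h1, h2⟩
      · obtain ⟨j', _, he⟩ := Multiset.mem_map.1 h
        exact absurd he (by simp)
    · rw [unfoldDelta_not_dvd hn hm hd] at hg
      obtain ⟨j', _, he⟩ := Multiset.mem_map.1 hg
      obtain ⟨h1, h2, h3⟩ := Gen.real.inj he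
      have h4 : m % (n+1) ≠ 0 := fun h => hd (Nat.dvd_of_mod_eq_zero h)
      have h5 : m % (n+1) < n + 1 := Nat.mod_lt _ (by omega)
      refine ⟨⟨0, by rw [pow_zero, mul_one, ← h1, ← h3, Nat.div_add_mod]⟩, by omega, by omega⟩

lemma real_mem_unfoldDelta_of (hn : 1 ≤ n) {c ℓ : ℕ} {i : Fin (n+1)}
    (h1 : 0 < ℓ) (h2 : ℓ ≤ n) :
    ∀ t, Gen.real c i ℓ ∈ unfoldDelta n (((n+1)*c + ℓ) * (n+1)^t) := by
  intro t
  induction t with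
  | zero =>
    have hM : 0 < (n+1)*c + ℓ := by positivity
    have hmod : ((n+1)*c + ℓ) % (n+1) = ℓ := by
      rw [Nat.mul_add_mod]; exact Nat.mod_eq_of_lt (by omega)
    have hd : ¬ (n+1) ∣ ((n+1)*c + ℓ) := fun h => by
      rw [Nat.mod_eq_zero_of_dvd h] at hmod; omega
    have hdiv : ((n+1)*c + ℓ) / (n+1) = c := by
      rw [Nat.mul_add_div (by omega)]
      simp [Nat.div_eq_of_lt (show ℓ < n + 1 by omega)]
    rw [pow_zero, mul_one, unfoldDelta_not_dvd hn hM hd, hdiv, hmod]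
    exact Multiset.mem_map.2 ⟨i, Finset.mem_univ i, rfl⟩
  | succ t iht =>
    have hM : 0 < ((n+1)*c + ℓ) * (n+1)^(t+1) := by positivity
    have hd : (n+1) ∣ ((n+1)*c + ℓ) * (n+1)^(t+1) := ⟨((n+1)*c + ℓ) * (n+1)^t, by ring⟩
    have hdiv : ((n+1)*c + ℓ) * (n+1)^(t+1) / (n+1) = ((n+1)*c + ℓ) * (n+1)^t := by
      rw [pow_succ, ← mul_assoc, Nat.mul_div_cancel _ (by omega)]
    rw [unfoldDelta_dvd hn hM hd, hdiv]
    exact Multiset.mem_add.2 (Or.inl iht)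


lemma unfoldExpr_add (s t : Multiset (Gen n)) :
    unfoldExpr n (s + t) = unfoldExpr n s + unfoldExpr n t := by
  simp [unfoldExpr, Multiset.add_bind]

lemma unfoldExpr_cons (a : Gen n) (s : Multiset (Gen n)) :
    unfoldExpr n (a ::ₘ s) = (match a with
      | Gen.dsym m => unfoldDelta n m
      | a => {a}) + unfoldExpr n s := by
  simp [unfoldExpr, Multiset.cons_bind]

lemma unfoldExpr_cons_dsym (m : ℕ) (s : Multiset (Gen n)) :
    unfoldExpr n (Gen.dsym m ::ₘ s) = unfoldDelta n m + unfoldExpr n s :=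
  unfoldExpr_cons _ s

lemma mem_unfoldExpr_iff {g : Gen n} {e : Multiset (Gen n)} :
    g ∈ unfoldExpr n e ↔ (g ∈ e ∧ ¬ IsDsym g) ∨
      ∃ m, Gen.dsym m ∈ e ∧ g ∈ unfoldDelta n m := by
  rw [unfoldExpr, Multiset.mem_bind]
  constructor
  · rintro ⟨a, ha, hg⟩
    cases a with
    | dsym m => exact Or.inr ⟨m, ha, hg⟩
    | imag j q =>
      rw [Multiset.mem_singleton] at hg; subst hg
      exact Or.inl ⟨ha, fun h => h⟩
    | real c i l =>
      rw [Multiset.mem_singleton] at hg; subst hg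
      exact Or.inl ⟨ha, fun h => h⟩
  · rintro (⟨hg, hnd⟩ | ⟨m, hm, hg⟩)
    · refine ⟨g, hg, ?_⟩
      cases g with
      | dsym m => exact absurd trivial hnd
      | imag j q => exact Multiset.mem_singleton.2 rfl
      | real c i l => exact Multiset.mem_singleton.2 rfl
    · exact ⟨Gen.dsym m, hm, hg⟩

lemma unfoldExpr_of_noDsym {e : Multiset (Gen n)} (h : ∀ g ∈ e, ¬ IsDsym g) :
    unfoldExpr n e = e := by
  induction e using Multiset.induction_on with
  | empty => simp [unfoldExpr]
  | cons a s ih =>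
    rw [unfoldExpr_cons, ih (fun g hg => h g (Multiset.mem_cons_of_mem hg))]
    have : (match a with | Gen.dsym m => unfoldDelta n m | a => ({a} : Multiset (Gen n))) = {a} := by
      cases a with
      | dsym m => exact absurd trivial (h _ (Multiset.mem_cons_self _ _))
      | imag j q => rfl
      | real c i l => rfl
    rw [this, Multiset.singleton_add]

lemma IsKinf.mono {e e' : Multiset (Gen n)} (h : IsKinf n e) (hle : e' ≤ e) :
    IsKinf n e' := by
  refine ⟨fun g hg => h.1 g (Multiset.mem_of_le hle hg), fun ⟨k, hk, hc⟩ => h.2 ⟨k, hk, ?_⟩⟩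
  rcases hc with ⟨h1, h2⟩ | ⟨h1, h2, h3⟩
  · exact Or.inl ⟨h1, fun i => Multiset.mem_of_le hle (h2 i)⟩
  · exact Or.inr ⟨h1, Multiset.mem_of_le hle h2, fun j => Multiset.mem_of_le hle (h3 j)⟩

lemma exists_factor (hn : 1 ≤ n) : ∀ M, 0 < M → ∃ r t, ¬ (n+1) ∣ r ∧ M = r * (n+1)^t := by
  intro M
  induction M using Nat.strong_induction_on with
  | _ M ih =>
    intro hM
    by_cases hd : (n+1) ∣ M
    · have h1 : M / (n+1) < M := Nat.div_lt_self hM (by omega)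
      have h2 : 0 < M / (n+1) := Nat.div_pos (Nat.le_of_dvd hM hd) (by omega)
      obtain ⟨r, t, hr, he⟩ := ih _ h1 h2
      exact ⟨r, t + 1, hr, by rw [pow_succ, ← mul_assoc, ← he, Nat.div_mul_cancel hd]⟩
    · exact ⟨M, 0, hd, by rw [pow_zero, mul_one]⟩


lemma max_dsym_mem (hn : 1 ≤ n) {f₁ f₂ : Multiset (Gen n)}
    (h₁ : IsKinf n f₁) (h₂ : IsKinf n f₂)
    (hu : unfoldExpr n f₁ = unfoldExpr n f₂) {M : ℕ}
    (hM₁ : Gen.dsym M ∈ f₁) (hmax : ∀ m, Gen.dsym m ∈ f₂ → m ≤ M) :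
    Gen.dsym M ∈ f₂ := by
  by_contra hM₂
  have hM0 : 0 < M := h₁.1 _ hM₁
  -- chain lemma
  have chain : ∀ t, ∀ m, M = m * (n+1)^t → Gen.dsym m ∉ f₂ := by
    intro t
    induction t using Nat.strong_induction_on with
    | _ t iht =>
      intro m hMt hmem
      rcases Nat.eq_zero_or_pos t with rfl | ht
      · rw [pow_zero, mul_one] at hMt; exact hM₂ (hMt ▸ hmem)
      have hm0 : 0 < m := by
        rcases Nat.eq_zero_or_pos m with rfl | h
        · rw [zero_mul] at hMt; omega
        · exact h
      -- all imag j m ∈ f₂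
      have himag : ∀ j : Fin n, Gen.imag j m ∈ f₂ := by
        intro j
        have hF : Gen.imag j m ∈ unfoldExpr n f₂ := by
          rw [← hu]
          exact mem_unfoldExpr_iff.2 (Or.inr ⟨M, hM₁,
            hMt ▸ imag_mem_unfoldDelta_of hn hm0 t ht⟩)
        rcases mem_unfoldExpr_iff.1 hF with ⟨h, _⟩ | ⟨m', hm', hmem'⟩
        · exact h
        · obtain ⟨s, hs1, hs2⟩ := imag_mem_unfoldDelta hn _ hmem'
          have hle : m' ≤ M := hmax m' hm'
          have hst : s ≤ t := by
            rw [hs2, hMt] at hle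
            exact (Nat.pow_le_pow_iff_right (by omega : 1 < n+1)).1
              (Nat.le_of_mul_le_mul_left hle hm0)
          have hM' : M = m' * (n+1)^(t - s) := by
            rw [hs2, mul_assoc, ← pow_add, Nat.add_sub_cancel' hst, hMt]
          exact absurd hm' (iht (t - s) (by omega) m' hM')
      -- dsym m ∈ f₂ plus all imag gives removable
      apply h₂.2
      have hk : m * (n+1) / (n+1) = m := by rw [mul_comm]; exact Nat.mul_div_cancel_left _ (by omega)
      refine ⟨m * (n+1), by positivity, Or.inr ⟨dvd_mul_left (n+1) m, ?_, ?_⟩⟩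
      · rwa [hk]
      · rw [hk]; exact himag
  -- final contradiction at the core
  obtain ⟨r, a, hrd, hra⟩ := exists_factor hn M hM0
  set ℓ := r % (n+1) with hℓdef
  set c := r / (n+1) with hcdef
  have hℓ0 : 0 < ℓ := Nat.pos_of_ne_zero (fun h => hrd (Nat.dvd_of_mod_eq_zero h))
  have hℓn : ℓ ≤ n := by have := Nat.mod_lt r (show 0 < n+1 by omega); omega
  have hr0 : 0 < r := by have := Nat.mod_le r (n+1); omega
  have hrc : (n+1)*c + ℓ = r := Nat.div_add_mod r (n+1)
  -- some i₀ with real c i₀ ℓ ∉ f₂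
  have hi₀ : ∃ i₀ : Fin (n+1), Gen.real c i₀ ℓ ∉ f₂ := by
    by_contra h
    push_neg at h
    exact h₂.2 ⟨r, hr0, Or.inl ⟨hrd, fun i => h i⟩⟩
  obtain ⟨i₀, hi₀⟩ := hi₀
  have hF : Gen.real c i₀ ℓ ∈ unfoldExpr n f₂ := by
    rw [← hu]
    refine mem_unfoldExpr_iff.2 (Or.inr ⟨M, hM₁, ?_⟩)
    rw [hra, ← hrc]
    exact real_mem_unfoldDelta_of hn hℓ0 hℓn a
  rcases mem_unfoldExpr_iff.1 hF with ⟨h, _⟩ | ⟨m', hm', hmem'⟩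
  · exact hi₀ h
  · obtain ⟨⟨t, ht⟩, _, _⟩ := real_mem_unfoldDelta hn _ hmem'
    rw [hrc] at ht
    have hle : m' ≤ M := hmax m' hm'
    have hta : t ≤ a := by
      rw [ht, hra] at hle
      exact (Nat.pow_le_pow_iff_right (by omega : 1 < n+1)).1
        (Nat.le_of_mul_le_mul_left hle hr0)
    have hM' : M = m' * (n+1)^(a - t) := by
      rw [ht, mul_assoc, ← pow_add, Nat.add_sub_cancel' hta, hra]
    exact chain (a - t) m' hM' hm'


lemma inj_aux (hn : 1 ≤ n) : ∀ N : ℕ, ∀ f₁ f₂ : Multiset (Gen n),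
    Multiset.card f₁ + Multiset.card f₂ ≤ N →
    IsKinf n f₁ → IsKinf n f₂ → unfoldExpr n f₁ = unfoldExpr n f₂ → f₁ = f₂ := by
  intro N
  induction N with
  | zero =>
    intro f₁ f₂ hc _ _ _
    have h1 : f₁ = 0 := Multiset.card_eq_zero.1 (by omega)
    have h2 : f₂ = 0 := Multiset.card_eq_zero.1 (by omega)
    rw [h1, h2]
  | succ N ihN =>
    intro f₁ f₂ hc h₁ h₂ hu
    -- the finset of dsym values occurring in f₁ + f₂
    classical
    set T : Finset ℕ := (f₁ + f₂).toFinset.biUnion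
      (fun g => match g with | Gen.dsym m => {m} | _ => ∅) with hT
    have hmemT : ∀ m : ℕ, m ∈ T ↔ Gen.dsym m ∈ f₁ + f₂ := by
      intro m
      rw [hT, Finset.mem_biUnion]
      constructor
      · rintro ⟨g, hg, hmg⟩
        cases g with
        | dsym m' =>
          rw [Finset.mem_singleton] at hmg; subst hmg
          exact Multiset.mem_toFinset.1 hg
        | imag j q => simp at hmg
        | real c i l => simp at hmg
      · intro h
        exact ⟨Gen.dsym m, Multiset.mem_toFinset.2 h, Finset.mem_singleton.2 rfl⟩
    rcases Finset.eq_empty_or_nonempty T with hTe | hTne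
    · -- no dsyms: both equal their unfoldings
      have hnd : ∀ g ∈ f₁ + f₂, ¬ IsDsym g := by
        intro g hg hd
        cases g with
        | dsym m =>
          have : m ∈ T := (hmemT m).2 hg
          rw [hTe] at this; simp at this
        | imag j q => exact hd
        | real c i l => exact hd
      have e1 : unfoldExpr n f₁ = f₁ :=
        unfoldExpr_of_noDsym (fun g hg => hnd g (Multiset.mem_add.2 (Or.inl hg)))
      have e2 : unfoldExpr n f₂ = f₂ :=
        unfoldExpr_of_noDsym (fun g hg => hnd g (Multiset.mem_add.2 (Or.inr hg)))
      rw [← e1, ← e2, hu]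
    · set M := T.max' hTne with hM
      have hMmem : Gen.dsym M ∈ f₁ + f₂ := (hmemT M).1 (T.max'_mem hTne)
      have hmax1 : ∀ m, Gen.dsym m ∈ f₁ → m ≤ M :=
        fun m hm => T.le_max' m ((hmemT m).2 (Multiset.mem_add.2 (Or.inl hm)))
      have hmax2 : ∀ m, Gen.dsym m ∈ f₂ → m ≤ M :=
        fun m hm => T.le_max' m ((hmemT m).2 (Multiset.mem_add.2 (Or.inr hm)))
      have hboth : Gen.dsym M ∈ f₁ ∧ Gen.dsym M ∈ f₂ := by
        rcases Multiset.mem_add.1 hMmem with h | h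
        · exact ⟨h, max_dsym_mem hn h₁ h₂ hu h hmax2⟩
        · exact ⟨max_dsym_mem hn h₂ h₁ hu.symm h hmax1, h⟩
      obtain ⟨hd1, hd2⟩ := hboth
      have he1 : f₁ = Gen.dsym M ::ₘ f₁.erase (Gen.dsym M) := (Multiset.cons_erase hd1).symm
      have he2 : f₂ = Gen.dsym M ::ₘ f₂.erase (Gen.dsym M) := (Multiset.cons_erase hd2).symm
      have hu' : unfoldExpr n (f₁.erase (Gen.dsym M)) = unfoldExpr n (f₂.erase (Gen.dsym M)) := by
        have := hu
        rw [he1, he2, unfoldExpr_cons_dsym, unfoldExpr_cons_dsym] at this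
        exact add_left_cancel this
      have hcard1 : Multiset.card (f₁.erase (Gen.dsym M)) = Multiset.card f₁ - 1 :=
        Multiset.card_erase_of_mem hd1
      have hcard2 : Multiset.card (f₂.erase (Gen.dsym M)) = Multiset.card f₂ - 1 :=
        Multiset.card_erase_of_mem hd2
      have hc1 : 0 < Multiset.card f₁ := Multiset.card_pos_iff_exists_mem.2 ⟨_, hd1⟩
      have hc2 : 0 < Multiset.card f₂ := Multiset.card_pos_iff_exists_mem.2 ⟨_, hd2⟩
      have heq : f₁.erase (Gen.dsym M) = f₂.erase (Gen.dsym M) :=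
        ihN _ _ (by omega) (h₁.mono (Multiset.erase_le _ _)) (h₂.mono (Multiset.erase_le _ _)) hu'
      rw [he1, he2, heq]


lemma surj_aux (hn : 1 ≤ n) : ∀ N : ℕ, ∀ e : Multiset (Gen n),
    Multiset.card e ≤ N → (∀ g ∈ e, ValidGen n g) →
    ∃ f, IsKinf n f ∧ unfoldExpr n f = unfoldExpr n e := by
  intro N
  induction N with
  | zero =>
    intro e hc hv
    have : e = 0 := Multiset.card_eq_zero.1 (by omega)
    subst this
    exact ⟨0, ⟨by simp, fun ⟨k, hk, hcc⟩ => by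
      rcases hcc with ⟨_, h⟩ | ⟨_, h, _⟩
      · exact absurd (h 0) (by simp)
      · exact absurd h (by simp)⟩, rfl⟩
  | succ N ihN =>
    intro e hc hv
    by_cases hr : HasRemovableDeltaExpr n e
    · obtain ⟨k, hk, hcc⟩ := hr
      rcases hcc with ⟨hkd, hall⟩ | ⟨hkd, hds, hall⟩
      · -- replace a full real layer by dsym k
        set L : Multiset (Gen n) := Multiset.map
          (fun i : Fin (n+1) => Gen.real (k/(n+1)) i (k % (n+1))) Finset.univ.val with hL
        have hLnd : L.Nodup := Multiset.Nodup.map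
          (fun a b hab => by injection hab) Finset.univ.nodup
        have hLe : L ≤ e := by
          rw [Multiset.le_iff_subset hLnd]
          intro g hg
          obtain ⟨i, _, rfl⟩ := Multiset.mem_map.1 hg
          exact hall i
        have hLcard : Multiset.card L = n + 1 := by
          rw [hL, Multiset.card_map]; exact Finset.card_univ.trans (Fintype.card_fin _)
        have hLu : unfoldExpr n L = L := unfoldExpr_of_noDsym (by
          intro g hg
          obtain ⟨i, _, rfl⟩ := Multiset.mem_map.1 hg
          exact fun h => h)
        have hUD : unfoldDelta n k = L := unfoldDelta_not_dvd hn hk hkd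
        set e' : Multiset (Gen n) := Gen.dsym k ::ₘ (e - L) with he'
        have hee : e = (e - L) + L := (tsub_add_cancel_of_le hLe).symm
        have hucomp : unfoldExpr n e' = unfoldExpr n e := by
          rw [he', unfoldExpr_cons_dsym, hUD]
          conv_rhs => rw [hee]
          rw [unfoldExpr_add, hLu, add_comm]
        have hcard' : Multiset.card e' ≤ N := by
          have h1 : Multiset.card (e - L) = Multiset.card e - (n+1) := by
            rw [Multiset.card_sub hLe, hLcard]
          have h2 : n + 1 ≤ Multiset.card e := hLcard ▸ Multiset.card_le_card hLe
          rw [he', Multiset.card_cons, h1]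
          omega
        have hv' : ∀ g ∈ e', ValidGen n g := by
          intro g hg
          rcases Multiset.mem_cons.1 hg with rfl | hg'
          · exact hk
          · exact hv g (Multiset.mem_of_le (tsub_le_self) hg')
        obtain ⟨f, hf1, hf2⟩ := ihN e' hcard' hv'
        exact ⟨f, hf1, hf2.trans hucomp⟩
      · -- replace dsym (k/(n+1)) and a full imag layer by dsym k
        set q := k / (n+1) with hq
        set L : Multiset (Gen n) := Gen.dsym q ::ₘ Multiset.map
          (fun j : Fin n => Gen.imag j q) Finset.univ.val with hL
        have hLnd : L.Nodup := by
          rw [hL, Multiset.nodup_cons]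
          constructor
          · intro h
            obtain ⟨j, _, hj⟩ := Multiset.mem_map.1 h
            cases hj
          · exact Multiset.Nodup.map (fun a b hab => by injection hab) Finset.univ.nodup
        have hLe : L ≤ e := by
          rw [Multiset.le_iff_subset hLnd]
          intro g hg
          rcases Multiset.mem_cons.1 hg with rfl | hg'
          · exact hds
          · obtain ⟨j, _, rfl⟩ := Multiset.mem_map.1 hg'
            exact hall j
        have hLcard : Multiset.card L = n + 1 := by
          rw [hL, Multiset.card_cons, Multiset.card_map]
          show Finset.univ.card + 1 = n + 1
          rw [Finset.card_univ, Fintype.card_fin]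
        have hq0 : 0 < q := Nat.div_pos (Nat.le_of_dvd hk hkd) (by omega)
        have hLu : unfoldExpr n L = unfoldDelta n q +
            Multiset.map (fun j : Fin n => Gen.imag j q) Finset.univ.val := by
          rw [hL, unfoldExpr_cons_dsym, unfoldExpr_of_noDsym (by
            intro g hg
            obtain ⟨j, _, rfl⟩ := Multiset.mem_map.1 hg
            exact fun h => h)]
        have hUD : unfoldDelta n k = unfoldDelta n q +
            Multiset.map (fun j : Fin n => Gen.imag j q) Finset.univ.val :=
          unfoldDelta_dvd hn hk hkd
        set e' : Multiset (Gen n) := Gen.dsym k ::ₘ (e - L) with he'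
        have hee : e = (e - L) + L := (tsub_add_cancel_of_le hLe).symm
        have hucomp : unfoldExpr n e' = unfoldExpr n e := by
          rw [he', unfoldExpr_cons_dsym, hUD]
          conv_rhs => rw [hee]
          rw [unfoldExpr_add, hLu, add_comm]
        have hcard' : Multiset.card e' ≤ N := by
          have h1 : Multiset.card (e - L) = Multiset.card e - (n+1) := by
            rw [Multiset.card_sub hLe, hLcard]
          have h2 : n + 1 ≤ Multiset.card e := hLcard ▸ Multiset.card_le_card hLe
          rw [he', Multiset.card_cons, h1]
          omega
        have hv' : ∀ g ∈ e', ValidGen n g := by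
          intro g hg
          rcases Multiset.mem_cons.1 hg with rfl | hg'
          · exact hk
          · exact hv g (Multiset.mem_of_le (tsub_le_self) hg')
        obtain ⟨f, hf1, hf2⟩ := ihN e' hcard' hv'
        exact ⟨f, hf1, hf2.trans hucomp⟩
    · exact ⟨e, ⟨hv, hr⟩, rfl⟩

end Aux

/-- Lemma 3.4: the reduction map ψ : K → K(∞) is a bijection whose inverse is the
unfolding map φ : K(∞) → K. Equivalently, the unfolding map φ restricts to a bijection
from the set K(∞) of reduced expressions onto the set K of Kostant partitions. -/
theorem reduction_unfolding_bijection (n : ℕ) (hn : 1 ≤ n) :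
    Set.BijOn (unfoldExpr n) {e | IsKinf n e} {e | IsK n e} := by
  refine ⟨?_, ?_, ?_⟩
  · -- MapsTo
    intro e he
    intro g hg
    rcases mem_unfoldExpr_iff.1 hg with ⟨h, hnd⟩ | ⟨m, hm, hmem⟩
    · exact ⟨he.1 g h, hnd⟩
    · exact valid_unfoldDelta hn m g hmem
  · -- InjOn
    intro f₁ h₁ f₂ h₂ hu
    exact inj_aux hn (Multiset.card f₁ + Multiset.card f₂) f₁ f₂ le_rfl h₁ h₂ hu
  · -- SurjOn
    intro e he
    obtain ⟨f, hf1, hf2⟩ := surj_aux hn (Multiset.card e) e le_rfl (fun g hg => (he g hg).1)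
    refine ⟨f, hf1, ?_⟩
    rw [hf2, unfoldExpr_of_noDsym (fun g hg => (he g hg).2)]
end

section
/- The map Ψ from reduced proper generalized Young walls to reduced Kostant partitions, sending the k-th row of Y with N boxes (k ≡ j mod n+1, 1 ≤ j ≤ n) to the part (kδ_j) if N = (n+1)k', to (k'δ + α_{j-1}^(ℓ)) if N = (n+1)k' + ℓ with 1 ≤ ℓ ≤ n, and sending rows in positions ≡ 0 mod n+1 with N = (n+1)k' boxes to δ^(k') and with N = (n+1)k' + ℓ boxes to (k'δ + α_n^(ℓ)), is a bijection Y(∞) → K(∞), with inverse Φ given by forming, for each part, a row of the prescribed length in the prescribed residue class, arranged in weakly decreasing order within each residue class. -/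
/- Generalized Young walls, encoded by their sequence of row lengths:
`Y r` is the number of boxes in the (r+1)-st row from the bottom. -/

def IsProper (n : ℕ) (Y : ℕ →₀ ℕ) : Prop :=
  ∀ r s : ℕ, r ≤ s → r % (n+1) = s % (n+1) → Y s ≤ Y r

/-- `aCount n Y i k` is the number of i-colored boxes in the k-th column of Y. -/
def aCount (n : ℕ) (Y : ℕ →₀ ℕ) (i : ZMod (n+1)) (k : ℕ) : ℕ :=
  (Y.support.filter (fun r => k ≤ Y r ∧ (((r : ℤ) + 1 - (k : ℤ) : ℤ) : ZMod (n+1)) = i)).card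

/-- Some column of Y contains a removable δ. -/
def HasRemovableDelta (n : ℕ) (Y : ℕ →₀ ℕ) : Prop :=
  ∃ k : ℕ, 1 ≤ k ∧ ∀ i : ZMod (n+1), aCount n Y (i - 1) (k+1) < aCount n Y i k

/-- Reduced proper generalized Young walls. -/
def IsYinf (n : ℕ) (Y : ℕ →₀ ℕ) : Prop :=
  IsProper n Y ∧ ¬ HasRemovableDelta n Y

def resFin (n r : ℕ) : Fin (n+1) := ⟨(r+1) % (n+1), Nat.mod_lt _ (Nat.succ_pos n)⟩

/-- The Kostant partition part(s) assigned to a row in residue class j (of row number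
mod n+1) with N boxes. -/
def rowPart (n : ℕ) (j : Fin (n+1)) (N : ℕ) : Multiset (Gen n) :=
  if N = 0 then 0
  else if hj : j.val = 0 then
    if N % (n+1) = 0 then {Gen.dsym (N/(n+1))}
    else {Gen.real (N/(n+1)) (Fin.last n) (N % (n+1))}
  else
    if N % (n+1) = 0 then {Gen.imag ⟨j.val - 1, by have := j.isLt; omega⟩ (N/(n+1))}
    else {Gen.real (N/(n+1)) ⟨j.val - 1, by have := j.isLt; omega⟩ (N % (n+1))}

/-- The map Ψ from generalized Young walls to Kostant partition expressions. -/
def PsiMap (n : ℕ) (Y : ℕ →₀ ℕ) : Multiset (Gen n) :=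
  Y.support.val.bind (fun r => rowPart n (resFin n r) (Y r))


/-! ### Auxiliary machinery for the proof -/

section PsiAux

variable {n : ℕ}

/-- The column index `i` of a real part coming from a row in class `j`:
`j = 0 ↦ last`, `j ≠ 0 ↦ j - 1`.  `encodeIdx` is its inverse. -/
def encodeIdx (n : ℕ) (i : Fin (n+1)) : Fin (n+1) :=
  if h : i.val = n then 0 else ⟨i.val + 1, by have := i.isLt; omega⟩

/-- The single generator associated to a row of class `j` with `N ≥ 1` boxes. -/
def genOf (n : ℕ) (j : Fin (n+1)) (N : ℕ) : Gen n :=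
  if N % (n+1) = 0 then
    if hj : j.val = 0 then Gen.dsym (N / (n+1))
    else Gen.imag ⟨j.val - 1, by have := j.isLt; omega⟩ (N / (n+1))
  else
    Gen.real (N / (n+1))
      (if hj : j.val = 0 then Fin.last n else ⟨j.val - 1, by have := j.isLt; omega⟩)
      (N % (n+1))

/-- Decode a generator into (residue class, row length). -/
def decodeGen (n : ℕ) : Gen n → Fin (n+1) × ℕ
  | Gen.imag j m => (j.succ, m * (n+1))
  | Gen.real c i ℓ => (encodeIdx n i, c * (n+1) + ℓ)
  | Gen.dsym m => (0, m * (n+1))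

lemma rowPart_eq_singleton (j : Fin (n+1)) {N : ℕ} (hN : N ≠ 0) :
    rowPart n j N = {genOf n j N} := by
  unfold rowPart genOf
  by_cases hj : j.val = 0 <;> by_cases h : N % (n+1) = 0 <;> simp [hN, hj, h]

lemma div_mul_add_mod (N : ℕ) : N / (n+1) * (n+1) + N % (n+1) = N := by
  rw [Nat.mul_comm]; exact Nat.div_add_mod N (n+1)

lemma decodeGen_genOf (j : Fin (n+1)) {N : ℕ} (hN : N ≠ 0) :
    decodeGen n (genOf n j N) = (j, N) := by
  have hjlt := j.isLt
  have hdm := div_mul_add_mod (n := n) N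
  unfold genOf
  split_ifs with h hj hj
  · have hc : N / (n+1) * (n+1) = N := Nat.div_mul_cancel (Nat.dvd_of_mod_eq_zero h)
    exact Prod.ext (Fin.ext (by simpa [decodeGen] using hj.symm)) (by simpa [decodeGen] using hc)
  · have hc : N / (n+1) * (n+1) = N := Nat.div_mul_cancel (Nat.dvd_of_mod_eq_zero h)
    refine Prod.ext (Fin.ext ?_) (by simpa [decodeGen] using hc)
    simp only [decodeGen, Fin.val_succ]
    omega
  · refine Prod.ext (Fin.ext ?_) (by simpa [decodeGen] using hdm)
    simp only [decodeGen, encodeIdx]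
    split_ifs with h2
    · simpa using hj.symm
    · simp at h2
  · refine Prod.ext (Fin.ext ?_) (by simpa [decodeGen] using hdm)
    simp only [decodeGen, encodeIdx]
    split_ifs with h2
    · omega
    · simp; omega

lemma genOf_decodeGen {g : Gen n} (hg : ValidGen n g) :
    genOf n (decodeGen n g).1 (decodeGen n g).2 = g := by
  cases g with
  | imag j m =>
      have hjlt := j.isLt
      have h1 : m * (n+1) % (n+1) = 0 := Nat.mul_mod_left m (n+1)
      have h2 : m * (n+1) / (n+1) = m := Nat.mul_div_cancel m (Nat.succ_pos n)
      show genOf n j.succ (m * (n+1)) = Gen.imag j m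
      unfold genOf
      rw [if_pos h1, dif_neg (by simp), h2]
      congr 1
  | dsym m =>
      have h1 : m * (n+1) % (n+1) = 0 := Nat.mul_mod_left m (n+1)
      have h2 : m * (n+1) / (n+1) = m := Nat.mul_div_cancel m (Nat.succ_pos n)
      show genOf n 0 (m * (n+1)) = Gen.dsym m
      unfold genOf
      rw [if_pos h1, dif_pos (show ((0 : Fin (n+1)) : ℕ) = 0 by simp), h2]
  | real c i ℓ =>
      obtain ⟨hl1, hl2⟩ := hg
      have hilt := i.isLt
      have h1 : (c * (n+1) + ℓ) % (n+1) = ℓ := by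
        rw [Nat.mul_comm, Nat.mul_add_mod]; exact Nat.mod_eq_of_lt (by omega)
      have h2 : (c * (n+1) + ℓ) / (n+1) = c := by
        rw [Nat.mul_comm, Nat.mul_add_div (Nat.succ_pos n)]
        simp [Nat.div_eq_of_lt (show ℓ < n+1 by omega)]
      show genOf n (encodeIdx n i) (c * (n+1) + ℓ) = Gen.real c i ℓ
      unfold genOf
      rw [if_neg (by rw [h1]; omega), h1, h2]
      congr 1
      unfold encodeIdx
      split_ifs with hi hj hj
      · exact Fin.ext (by simp [hi])
      · exact absurd hj (by simp)
      · simp at hj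
      · exact Fin.ext (by simp)

lemma decodeGen_snd_pos {g : Gen n} (hg : ValidGen n g) : 0 < (decodeGen n g).2 := by
  cases g with
  | imag j m => have : 0 < m := hg; simp [decodeGen]; positivity
  | dsym m => have : 0 < m := hg; simp [decodeGen]; positivity
  | real c i ℓ => obtain ⟨h1, h2⟩ := hg; simp [decodeGen]; omega

lemma encodeIdx_surjective (j : Fin (n+1)) : ∃ i : Fin (n+1), encodeIdx n i = j := by
  by_cases hj : j.val = 0
  · exact ⟨Fin.last n, by simp [encodeIdx, Fin.ext_iff, hj]⟩
  · have hjlt := j.isLt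
    refine ⟨⟨j.val - 1, by omega⟩, ?_⟩
    unfold encodeIdx
    rw [dif_neg (by simp; omega)]
    exact Fin.ext (by simp; omega)

/-- The multiset of (residue class, length) data of the nonempty rows. -/
def toPairs (n : ℕ) (Y : ℕ →₀ ℕ) : Multiset (Fin (n+1) × ℕ) :=
  Y.support.val.map (fun r => (resFin n r, Y r))

lemma toPairs_snd_pos {Y : ℕ →₀ ℕ} {p : Fin (n+1) × ℕ} (hp : p ∈ toPairs n Y) :
    0 < p.2 := by
  obtain ⟨r, hr, rfl⟩ := Multiset.mem_map.mp hp
  have := Finsupp.mem_support_iff.mp (Finset.mem_val.mp hr)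
  omega

lemma psiMap_eq (Y : ℕ →₀ ℕ) :
    PsiMap n Y = (toPairs n Y).map (fun p => genOf n p.1 p.2) := by
  unfold PsiMap toPairs
  rw [Multiset.map_map]
  have : ∀ r ∈ Y.support.val,
      rowPart n (resFin n r) (Y r) = {genOf n (resFin n r) (Y r)} := fun r hr =>
    rowPart_eq_singleton _ (Finsupp.mem_support_iff.mp (Finset.mem_val.mp hr))
  rw [Multiset.bind_congr this, Multiset.bind_singleton]
  rfl

lemma mem_psiMap_iff {Y : ℕ →₀ ℕ} {g : Gen n} (hg : ValidGen n g) :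
    g ∈ PsiMap n Y ↔ decodeGen n g ∈ toPairs n Y := by
  rw [psiMap_eq]
  constructor
  · intro hgmem
    obtain ⟨p, hp, rfl⟩ := Multiset.mem_map.mp hgmem
    have := decodeGen_genOf (n := n) p.1 (N := p.2)
      (Nat.pos_iff_ne_zero.mp (toPairs_snd_pos hp))
    rw [this]
    simpa using hp
  · intro hmem
    exact Multiset.mem_map.mpr ⟨decodeGen n g, hmem, genOf_decodeGen hg⟩

lemma valid_of_mem_psiMap {Y : ℕ →₀ ℕ} {g : Gen n} (hg : g ∈ PsiMap n Y) :
    ValidGen n g := by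
  rw [psiMap_eq] at hg
  obtain ⟨p, hp, rfl⟩ := Multiset.mem_map.mp hg
  have hN : 0 < p.2 := toPairs_snd_pos hp
  have hmlt : p.2 % (n+1) < n+1 := Nat.mod_lt p.2 (Nat.succ_pos n)
  unfold genOf
  split_ifs with h hj
  · exact Nat.div_pos (Nat.le_of_dvd hN (Nat.dvd_of_mod_eq_zero h)) (Nat.succ_pos n)
  · exact Nat.div_pos (Nat.le_of_dvd hN (Nat.dvd_of_mod_eq_zero h)) (Nat.succ_pos n)
  · exact ⟨by omega, by omega⟩
  · exact ⟨by omega, by omega⟩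

lemma mem_toPairs_iff {Y : ℕ →₀ ℕ} {j : Fin (n+1)} {k : ℕ} (hk : 0 < k) :
    (j, k) ∈ toPairs n Y ↔ ∃ r, resFin n r = j ∧ Y r = k := by
  unfold toPairs
  rw [Multiset.mem_map]
  constructor
  · rintro ⟨r, hr, heq⟩
    rw [Prod.ext_iff] at heq
    exact ⟨r, heq.1, heq.2⟩
  · rintro ⟨r, h1, h2⟩
    exact ⟨r, Finset.mem_val.mpr (Finsupp.mem_support_iff.mpr (by omega)),
      by rw [h1, h2]⟩

lemma hre_psi_iff (Y : ℕ →₀ ℕ) :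
    HasRemovableDeltaExpr n (PsiMap n Y) ↔
      ∃ k, 0 < k ∧ ∀ j : Fin (n+1), (j, k) ∈ toPairs n Y := by
  constructor
  · rintro ⟨k, hk, hcase⟩
    refine ⟨k, hk, fun j => ?_⟩
    rcases hcase with ⟨hnd, hall⟩ | ⟨hd, hds, him⟩
    · obtain ⟨i, hi⟩ := encodeIdx_surjective j
      have hmod : k % (n+1) ≠ 0 := fun h => hnd (Nat.dvd_of_mod_eq_zero h)
      have hmlt : k % (n+1) < n+1 := Nat.mod_lt k (Nat.succ_pos n)
      have hvalid : ValidGen n (Gen.real (k/(n+1)) i (k % (n+1))) :=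
        ⟨by omega, by omega⟩
      have hmem := (mem_psiMap_iff hvalid).mp (hall i)
      have hsnd : k/(n+1) * (n+1) + k % (n+1) = k := div_mul_add_mod k
      simpa [decodeGen, hi, hsnd] using hmem
    · have hm : 0 < k / (n+1) := Nat.div_pos (Nat.le_of_dvd hk hd) (Nat.succ_pos n)
      have hmk : k / (n+1) * (n+1) = k := Nat.div_mul_cancel hd
      by_cases hj : j.val = 0
      · have hmem := (mem_psiMap_iff
          (show ValidGen n (Gen.dsym (k/(n+1))) from hm)).mp hds
        have hj0 : j = 0 := Fin.ext (by simpa using hj)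
        simpa [decodeGen, hmk, hj0] using hmem
      · have hjlt := j.isLt
        have hmem := (mem_psiMap_iff
          (show ValidGen n (Gen.imag ⟨j.val - 1, by omega⟩ (k/(n+1))) from hm)).mp
          (him ⟨j.val - 1, by omega⟩)
        have hsucc : (⟨j.val - 1, by omega⟩ : Fin n).succ = j :=
          Fin.ext (by simp [Fin.val_succ]; omega)
        simpa [decodeGen, hmk, hsucc] using hmem
  · rintro ⟨k, hk, hall⟩
    refine ⟨k, hk, ?_⟩
    by_cases hd : (n+1) ∣ k
    · right
      have hm : 0 < k / (n+1) := Nat.div_pos (Nat.le_of_dvd hk hd) (Nat.succ_pos n)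
      have hmk : k / (n+1) * (n+1) = k := Nat.div_mul_cancel hd
      refine ⟨hd, ?_, fun j' => ?_⟩
      · exact (mem_psiMap_iff (show ValidGen n (Gen.dsym (k/(n+1))) from hm)).mpr
          (by simpa [decodeGen, hmk] using hall 0)
      · exact (mem_psiMap_iff (show ValidGen n (Gen.imag j' (k/(n+1))) from hm)).mpr
          (by simpa [decodeGen, hmk] using hall j'.succ)
    · left
      refine ⟨hd, fun i => ?_⟩
      have hmod : k % (n+1) ≠ 0 := fun h => hd (Nat.dvd_of_mod_eq_zero h)
      have hmlt : k % (n+1) < n+1 := Nat.mod_lt k (Nat.succ_pos n)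
      have hvalid : ValidGen n (Gen.real (k/(n+1)) i (k % (n+1))) :=
        ⟨by omega, by omega⟩
      exact (mem_psiMap_iff hvalid).mpr
        (by simpa [decodeGen, div_mul_add_mod k] using hall (encodeIdx n i))

lemma card_filter_lt_iff {α : Type*} (s : Finset α) (p q : α → Prop)
    [DecidablePred p] [DecidablePred q] (hw : ∀ a ∈ s, q a → p a) :
    (s.filter q).card < (s.filter p).card ↔ ∃ a ∈ s, p a ∧ ¬ q a := by
  constructor
  · intro h
    by_contra hc
    push_neg at hc
    have hsub : s.filter p ⊆ s.filter q := by
      intro a ha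
      rw [Finset.mem_filter] at *
      exact ⟨ha.1, hc a ha.1 ha.2⟩
    exact absurd (Finset.card_le_card hsub) (by omega)
  · rintro ⟨a, ha, hpa, hqa⟩
    apply Finset.card_lt_card
    rw [Finset.ssubset_iff_of_subset (by
      intro b hb
      rw [Finset.mem_filter] at *
      exact ⟨hb.1, hw b hb.1 hb.2⟩)]
    exact ⟨a, Finset.mem_filter.mpr ⟨ha, hpa⟩,
      fun hmem => hqa (Finset.mem_filter.mp hmem).2⟩

lemma aCount_lt_iff {Y : ℕ →₀ ℕ} {k : ℕ} (hk : 0 < k) (i : ZMod (n+1)) :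
    aCount n Y (i - 1) (k+1) < aCount n Y i k ↔
      ∃ r ∈ Y.support, Y r = k ∧ (((r : ℤ) + 1 - (k : ℤ) : ℤ) : ZMod (n+1)) = i := by
  have hcol : ∀ r : ℕ, (((r : ℤ) + 1 - ((k+1 : ℕ) : ℤ) : ℤ) : ZMod (n+1))
      = (((r : ℤ) + 1 - (k : ℤ) : ℤ) : ZMod (n+1)) - 1 := by
    intro r; push_cast; ring
  rw [aCount, aCount]
  rw [card_filter_lt_iff Y.support _ _ (by
    intro r _ hq
    refine ⟨by omega, ?_⟩
    have := hq.2
    rw [hcol r] at this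
    have h2 := congrArg (· + (1 : ZMod (n+1))) this
    simpa using h2)]
  constructor
  · rintro ⟨r, hr, ⟨hle, hcoli⟩, hnq⟩
    refine ⟨r, hr, ?_, hcoli⟩
    by_contra hne
    exact hnq ⟨by omega, by rw [hcol r, hcoli]⟩
  · rintro ⟨r, hr, hYr, hcoli⟩
    exact ⟨r, hr, ⟨by omega, hcoli⟩, fun hq => by omega⟩

lemma color_class_iff {Y : ℕ →₀ ℕ} {k : ℕ} (hk : 0 < k) :
    (∀ i : ZMod (n+1), ∃ r ∈ Y.support, Y r = k ∧
        (((r : ℤ) + 1 - (k : ℤ) : ℤ) : ZMod (n+1)) = i) ↔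
      (∀ j : Fin (n+1), ∃ r, resFin n r = j ∧ Y r = k) := by
  have hcast : ∀ r : ℕ, (((r : ℤ) + 1 - (k : ℤ) : ℤ) : ZMod (n+1))
      = ((r + 1 : ℕ) : ZMod (n+1)) - ((k : ℕ) : ZMod (n+1)) := by
    intro r; push_cast; ring
  constructor
  · intro h j
    obtain ⟨r, hr, hYr, hcoli⟩ :=
      h (((j.val : ℕ) : ZMod (n+1)) - ((k : ℕ) : ZMod (n+1)))
    refine ⟨r, ?_, hYr⟩
    rw [hcast] at hcoli
    have hca : ((r + 1 : ℕ) : ZMod (n+1)) = ((j.val : ℕ) : ZMod (n+1)) := by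
      have h2 := congrArg (· + ((k : ℕ) : ZMod (n+1))) hcoli
      simpa using h2
    have hmod : (r+1) % (n+1) = j.val % (n+1) :=
      (ZMod.natCast_eq_natCast_iff _ _ _).mp hca
    exact Fin.ext (by
      show (r+1) % (n+1) = j.val
      rw [hmod, Nat.mod_eq_of_lt j.isLt])
  · intro h i
    obtain ⟨r, hres, hYr⟩ := h ⟨(i + ((k : ℕ) : ZMod (n+1))).val, ZMod.val_lt _⟩
    refine ⟨r, Finsupp.mem_support_iff.mpr (by omega), hYr, ?_⟩
    rw [hcast]
    have h1 : ((r + 1 : ℕ) : ZMod (n+1))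
        = (((i + ((k : ℕ) : ZMod (n+1))).val : ℕ) : ZMod (n+1)) := by
      rw [ZMod.natCast_eq_natCast_iff]
      show (r+1) % (n+1) = (i + ((k : ℕ) : ZMod (n+1))).val % (n+1)
      rw [Nat.mod_eq_of_lt (ZMod.val_lt _)]
      exact congrArg Fin.val hres
    rw [h1, ZMod.natCast_val, ZMod.cast_id]
    ring

lemma hrd_iff (Y : ℕ →₀ ℕ) :
    HasRemovableDelta n Y ↔ ∃ k, 0 < k ∧ ∀ j : Fin (n+1), (j, k) ∈ toPairs n Y := by
  unfold HasRemovableDelta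
  constructor
  · rintro ⟨k, hk, h⟩
    refine ⟨k, hk, fun j => ?_⟩
    rw [mem_toPairs_iff hk]
    exact (color_class_iff hk).mp (fun i => (aCount_lt_iff hk i).mp (h i)) j
  · rintro ⟨k, hk, h⟩
    exact ⟨k, hk, fun i => (aCount_lt_iff hk i).mpr
      ((color_class_iff hk).mpr (fun j => (mem_toPairs_iff hk).mp (h j)) i)⟩

lemma g_mod {t c : ℕ} (hc : c < n+1) : ((n+1)*t + c) % (n+1) = c := by
  rw [Nat.mul_add_mod]; exact Nat.mod_eq_of_lt hc

lemma g_div {t c : ℕ} (hc : c < n+1) : ((n+1)*t + c) / (n+1) = t := by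
  rw [Nat.mul_add_div (Nat.succ_pos n), Nat.div_eq_of_lt hc, Nat.add_zero]

lemma resFin_eq_resFin_iff {r s : ℕ} :
    resFin n r = resFin n s ↔ r % (n+1) = s % (n+1) := by
  rw [Fin.ext_iff]
  show (r+1) % (n+1) = (s+1) % (n+1) ↔ _
  exact ⟨fun h => Nat.ModEq.add_right_cancel' 1 h, fun h => Nat.ModEq.add_right 1 h⟩

lemma mem_iff_lt_card {T : Finset ℕ} (hT : ∀ a ∈ T, ∀ b, b ≤ a → b ∈ T) (t : ℕ) :
    t ∈ T ↔ t + 1 ≤ T.card := by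
  constructor
  · intro ht
    have hsub : Finset.range (t+1) ⊆ T := fun b hb =>
      hT t ht b (Nat.lt_succ_iff.mp (Finset.mem_range.mp hb))
    simpa using Finset.card_le_card hsub
  · intro hcard
    by_contra hnot
    have hsub : T ⊆ Finset.range t := by
      intro a ha
      rw [Finset.mem_range]
      by_contra hge
      exact hnot (hT a ha t (by omega))
    have := Finset.card_le_card hsub
    simp only [Finset.card_range] at this
    omega

lemma proper_le_iff {Y : ℕ →₀ ℕ} (hY : IsProper n Y) (r v : ℕ) (hv : 1 ≤ v) :
    v ≤ Y r ↔ r / (n+1) + 1 ≤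
      (toPairs n Y).countP (fun p => p.1 = resFin n r ∧ v ≤ p.2) := by
  set c := r % (n+1) with hc
  have hclt : c < n+1 := Nat.mod_lt r (Nat.succ_pos n)
  set F := Y.support.filter (fun s => resFin n s = resFin n r ∧ v ≤ Y s) with hF
  have hcount : (toPairs n Y).countP (fun p => p.1 = resFin n r ∧ v ≤ p.2)
      = F.card := by
    unfold toPairs
    rw [Multiset.countP_map]
    rfl
  have hmemF : ∀ s, s ∈ F ↔ (s % (n+1) = c ∧ v ≤ Y s) := by
    intro s
    rw [hF, Finset.mem_filter, Finsupp.mem_support_iff, resFin_eq_resFin_iff]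
    exact ⟨fun ⟨_, h1, h2⟩ => ⟨h1, h2⟩, fun ⟨h1, h2⟩ => ⟨by omega, h1, h2⟩⟩
  set T := F.image (fun s => s / (n+1)) with hT
  have hgF : ∀ t, t ∈ T ↔ ((n+1)*t + c) ∈ F := by
    intro t
    constructor
    · intro ht
      obtain ⟨s, hs, rfl⟩ := Finset.mem_image.mp ht
      have hsc : s % (n+1) = c := ((hmemF s).mp hs).1
      have hgs : (n+1)*(s/(n+1)) + c = s := by
        rw [← hsc]; exact Nat.div_add_mod s (n+1)
      rwa [hgs]
    · intro hmem
      exact Finset.mem_image.mpr ⟨(n+1)*t + c, hmem, g_div hclt⟩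
  have hTdc : ∀ a ∈ T, ∀ b, b ≤ a → b ∈ T := by
    intro a ha b hba
    rw [hgF] at ha ⊢
    rw [hmemF] at ha ⊢
    refine ⟨g_mod hclt, le_trans ha.2 ?_⟩
    exact hY _ _ (Nat.add_le_add_right (Nat.mul_le_mul_left (n+1) hba) c)
      (by rw [g_mod hclt, g_mod hclt])
  have hcardT : T.card = F.card := Finset.card_image_of_injOn (by
    intro s hs s' hs' heq
    have h1 : s % (n+1) = c := ((hmemF s).mp hs).1
    have h2 : s' % (n+1) = c := ((hmemF s').mp hs').1
    have e1 := Nat.div_add_mod s (n+1)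
    have e2 := Nat.div_add_mod s' (n+1)
    have heq' : s / (n+1) = s' / (n+1) := heq
    rw [← e1, ← e2, heq', h1, h2])
  have hrF : v ≤ Y r ↔ r / (n+1) ∈ T := by
    rw [hgF, hmemF]
    have hgr : (n+1)*(r/(n+1)) + c = r := by
      rw [hc]; exact Nat.div_add_mod r (n+1)
    rw [hgr]
    exact ⟨fun hvr => ⟨rfl, hvr⟩, fun hh => hh.2⟩
  rw [hcount, ← hcardT, hrF]
  exact mem_iff_lt_card hTdc _

lemma toPairs_injective {Y Y' : ℕ →₀ ℕ} (hY : IsProper n Y) (hY' : IsProper n Y')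
    (h : toPairs n Y = toPairs n Y') : Y = Y' := by
  ext r
  have key : ∀ v, 1 ≤ v → (v ≤ Y r ↔ v ≤ Y' r) := by
    intro v hv
    rw [proper_le_iff hY r v hv, proper_le_iff hY' r v hv, h]
  by_cases h0 : Y r = 0 <;> by_cases h0' : Y' r = 0
  · omega
  · have := (key (Y' r) (by omega)).mpr le_rfl; omega
  · have := (key (Y r) (by omega)).mp le_rfl; omega
  · have h1 := (key (Y r) (by omega)).mp le_rfl
    have h2 := (key (Y' r) (by omega)).mpr le_rfl
    omega

/-! ### The inverse construction Φ -/

/-- Sorted (weakly decreasing) list of row lengths prescribed for residue class `j`. -/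
def classList (n : ℕ) (P : Multiset (Fin (n+1) × ℕ)) (j : Fin (n+1)) : List ℕ :=
  ((P.filter (fun p => p.1 = j)).map Prod.snd).sort (· ≥ ·)

lemma classList_sorted (P : Multiset (Fin (n+1) × ℕ)) (j : Fin (n+1)) :
    (classList n P j).Pairwise (· ≥ ·) := Multiset.pairwise_sort _ _

lemma classList_coe (P : Multiset (Fin (n+1) × ℕ)) (j : Fin (n+1)) :
    (↑(classList n P j) : Multiset ℕ) = (P.filter (fun p => p.1 = j)).map Prod.snd :=
  Multiset.sort_eq _ _

lemma classList_length_le (P : Multiset (Fin (n+1) × ℕ)) (j : Fin (n+1)) :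
    (classList n P j).length ≤ Multiset.card P := by
  rw [show (classList n P j).length = Multiset.card (↑(classList n P j) : Multiset ℕ)
    from rfl, classList_coe, Multiset.card_map]
  exact Multiset.card_le_card (Multiset.filter_le _ _)

lemma getD_anti {L : List ℕ} (hL : L.Pairwise (· ≥ ·)) {t t' : ℕ} (h : t ≤ t') :
    L.getD t' 0 ≤ L.getD t 0 := by
  by_cases h' : t' < L.length
  · have ht : t < L.length := lt_of_le_of_lt h h'
    rw [List.getD_eq_getElem L 0 h', List.getD_eq_getElem L 0 ht]
    rcases eq_or_lt_of_le h with rfl | hlt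
    · exact le_rfl
    · have := hL.rel_get_of_lt (show (⟨t, ht⟩ : Fin L.length) < ⟨t', h'⟩ from hlt)
      simpa [List.get_eq_getElem] using this
  · rw [List.getD_eq_default L 0 (Nat.not_lt.mp h')]
    exact Nat.zero_le _

/-- The wall built from a multiset of (residue class, length) prescriptions. -/
noncomputable def buildY (n : ℕ) (P : Multiset (Fin (n+1) × ℕ)) : ℕ →₀ ℕ :=
  Finsupp.onFinset (Finset.range ((n+1) * (Multiset.card P + 1)))
    (fun r => (classList n P (resFin n r)).getD (r / (n+1)) 0)
    (fun r hr => by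
      have hlen : r / (n+1) < (classList n P (resFin n r)).length := by
        by_contra hge
        exact hr (List.getD_eq_default _ 0 (Nat.not_lt.mp hge))
      have hle : r / (n+1) + 1 ≤ Multiset.card P + 1 := by
        have := classList_length_le (n := n) P (resFin n r)
        omega
      have h1 : r < (n+1) * (r/(n+1)) + (n+1) := by
        conv_lhs => rw [← Nat.div_add_mod r (n+1)]
        exact Nat.add_lt_add_left (Nat.mod_lt r (Nat.succ_pos n)) _
      have h2 : (n+1) * (r/(n+1)) + (n+1) = (n+1) * (r/(n+1) + 1) := by ring
      have h3 : (n+1) * (r/(n+1) + 1) ≤ (n+1) * (Multiset.card P + 1) :=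
        Nat.mul_le_mul_left _ hle
      exact Finset.mem_range.mpr (lt_of_lt_of_le (h2 ▸ h1) h3))

lemma buildY_apply (P : Multiset (Fin (n+1) × ℕ)) (r : ℕ) :
    buildY n P r = (classList n P (resFin n r)).getD (r / (n+1)) 0 := rfl

lemma buildY_proper (P : Multiset (Fin (n+1) × ℕ)) : IsProper n (buildY n P) := by
  intro r s hrs hmod
  have hres : resFin n r = resFin n s := resFin_eq_resFin_iff.mpr hmod
  rw [buildY_apply, buildY_apply, ← hres]
  exact getD_anti (classList_sorted P _) (Nat.div_le_div_right hrs)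

lemma card_filter_getD (L : List ℕ) (N : ℕ) :
    ((Finset.range L.length).filter (fun t => L.getD t 0 = N)).card
      = Multiset.count N (↑L : Multiset ℕ) := by
  induction L with
  | nil => simp
  | cons a L ih =>
    have hbij : (Finset.range (a :: L).length).filter
          (fun t => (a :: L).getD t 0 = N)
        = (if a = N then {0} else ∅) ∪
          (((Finset.range L.length).filter (fun t => L.getD t 0 = N)).image
            (· + 1)) := by
      ext t
      simp only [Finset.mem_union, Finset.mem_filter, Finset.mem_range,
        Finset.mem_image, List.length_cons]
      cases t with
      | zero =>
          by_cases h : a = N <;>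
            simp [List.getD_cons_zero, h]
      | succ t =>
          by_cases h : a = N <;>
            simp [List.getD_cons_succ, h, Nat.succ_lt_succ_iff]
    rw [hbij, Finset.card_union_of_disjoint (by
      split_ifs with h
      · simp only [Finset.disjoint_left, Finset.mem_singleton, Finset.mem_image]
        rintro x rfl ⟨y, _, hy⟩
        omega
      · simp)]
    rw [Finset.card_image_of_injective _ (fun x y h => by omega), ih,
      show ((a :: L : List ℕ) : Multiset ℕ) = a ::ₘ (↑L : Multiset ℕ) from rfl,
      Multiset.count_cons]
    by_cases h : a = N
    · subst h; simp [add_comm]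
    · simp [h, show ¬ (N = a) from fun hh => h hh.symm]

lemma resFin_cj (j : Fin (n+1)) : resFin n ((j.val + n) % (n+1)) = j := by
  apply Fin.ext
  show ((j.val + n) % (n+1) + 1) % (n+1) = j.val
  rw [Nat.mod_add_mod, show j.val + n + 1 = j.val + (n+1) by ring,
    Nat.add_mod_right, Nat.mod_eq_of_lt j.isLt]

lemma resFin_eq_j_iff {r : ℕ} {j : Fin (n+1)} :
    resFin n r = j ↔ r % (n+1) = (j.val + n) % (n+1) := by
  conv_lhs => rw [← resFin_cj (n := n) j]
  rw [resFin_eq_resFin_iff, Nat.mod_mod_of_dvd _ dvd_rfl]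

lemma toPairs_buildY {P : Multiset (Fin (n+1) × ℕ)} (hP : ∀ p ∈ P, 0 < p.2) :
    toPairs n (buildY n P) = P := by
  set Y := buildY n P with hY
  rw [Multiset.ext]
  rintro ⟨j, N⟩
  by_cases hN : N = 0
  · subst hN
    rw [Multiset.count_eq_zero.mpr (fun h => by
        have := toPairs_snd_pos (n := n) h; simp at this),
      Multiset.count_eq_zero.mpr (fun h => by have := hP _ h; simp at this)]
  · -- N ≥ 1
    set L := classList n P j with hL
    set c := (j.val + n) % (n+1) with hc
    have hclt : c < n+1 := Nat.mod_lt _ (Nat.succ_pos n)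
    have hYval : ∀ r, r % (n+1) = c → Y r = L.getD (r / (n+1)) 0 := by
      intro r hr
      rw [hY, buildY_apply, show resFin n r = j from resFin_eq_j_iff.mpr hr]
    have hcount1 : Multiset.count (j, N) (toPairs n Y)
        = (Y.support.filter (fun r => (j, N) = (resFin n r, Y r))).card := by
      unfold toPairs
      rw [Multiset.count_map]
      rfl
    set T := (Finset.range L.length).filter (fun t => L.getD t 0 = N) with hT
    have himg : Y.support.filter (fun r => (j, N) = (resFin n r, Y r))
        = T.image (fun t => (n+1)*t + c) := by
      ext r
      simp only [Finset.mem_filter, Finsupp.mem_support_iff, Finset.mem_image,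
        hT, Finset.mem_range, Prod.ext_iff]
      constructor
      · rintro ⟨hne, hj, hYr⟩
        have hrc : r % (n+1) = c := resFin_eq_j_iff.mp hj.symm
        refine ⟨r / (n+1), ⟨?_, ?_⟩, ?_⟩
        · by_contra hge
          rw [hYval r hrc, List.getD_eq_default _ 0 (Nat.not_lt.mp hge)] at hYr
          omega
        · rw [← hYval r hrc]; exact hYr.symm
        · rw [← hrc]; exact Nat.div_add_mod r (n+1)
      · rintro ⟨t, ⟨hlt, hget⟩, rfl⟩
        have hrc : ((n+1)*t + c) % (n+1) = c := g_mod hclt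
        have hrd : ((n+1)*t + c) / (n+1) = t := g_div hclt
        have hYr : Y ((n+1)*t + c) = N := by rw [hYval _ hrc, hrd, hget]
        exact ⟨by omega, (resFin_eq_j_iff.mpr hrc).symm, hYr.symm⟩
    have hinj : Function.Injective (fun t => (n+1)*t + c) := by
      intro x y h
      simp only at h
      have := Nat.eq_of_mul_eq_mul_left (Nat.succ_pos n)
        (show (n+1)*x = (n+1)*y by omega)
      exact this
    rw [hcount1, himg, Finset.card_image_of_injective _ hinj, hT,
      card_filter_getD, hL, classList_coe, Multiset.count_map,
      Multiset.filter_filter]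
    rw [Multiset.count_eq_card_filter_eq]
    congr 1
    apply Multiset.filter_congr
    rintro ⟨j', N'⟩ _
    constructor
    · rintro ⟨h1, h2⟩; exact Prod.ext h2.symm h1
    · rintro h; rw [Prod.ext_iff] at h; exact ⟨h.2, h.1.symm⟩

end PsiAux

/-- Proposition 3.12: the map Ψ, sending each row of a reduced proper generalized Young
wall to the prescribed Kostant partition part (rows of length (n+1)k in positions
≡ j mod n+1, 1 ≤ j ≤ n, to (kδ_j); rows of length (n+1)k+ℓ there to (kδ + α_{j-1}^(ℓ));
rows in positions ≡ 0 of length (n+1)k to δ^(k) and of length (n+1)k+ℓ to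
(kδ + α_n^(ℓ))), is a bijection from Y(∞) onto K(∞) (its inverse Φ forms for each part
a row of the prescribed length in the prescribed residue class, arranged weakly
decreasingly within each class). -/
theorem Psi_bijection (n : ℕ) (hn : 1 ≤ n) :
    Set.BijOn (PsiMap n) {Y | IsYinf n Y} {e | IsKinf n e} := by
  have key : ∀ Y : ℕ →₀ ℕ,
      HasRemovableDelta n Y ↔ HasRemovableDeltaExpr n (PsiMap n Y) :=
    fun Y => (hrd_iff Y).trans (hre_psi_iff Y).symm
  have hmap : ∀ Z : ℕ →₀ ℕ, (PsiMap n Z).map (decodeGen n) = toPairs n Z := by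
    intro Z
    rw [psiMap_eq, Multiset.map_map]
    refine (Multiset.map_congr rfl ?_).trans (Multiset.map_id _)
    intro p hp
    exact (decodeGen_genOf p.1
      (Nat.pos_iff_ne_zero.mp (toPairs_snd_pos hp))).trans Prod.mk.eta
  refine ⟨?_, ?_, ?_⟩
  · intro Y hY
    exact ⟨fun g hg => valid_of_mem_psiMap hg, fun h => hY.2 ((key Y).mpr h)⟩
  · intro Y hY Y' hY' heq
    apply toPairs_injective hY.1 hY'.1
    rw [← hmap Y, ← hmap Y', heq]
  · intro e he
    have hval := he.1
    set P := e.map (decodeGen n) with hP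
    have hPpos : ∀ p ∈ P, 0 < p.2 := by
      intro p hp
      obtain ⟨g, hg, rfl⟩ := Multiset.mem_map.mp hp
      exact decodeGen_snd_pos (hval g hg)
    have hPsi : PsiMap n (buildY n P) = e := by
      rw [psiMap_eq, toPairs_buildY hPpos, hP, Multiset.map_map]
      refine (Multiset.map_congr rfl ?_).trans (Multiset.map_id e)
      intro g hg
      exact genOf_decodeGen (hval g hg)
    refine ⟨buildY n P, ⟨buildY_proper P, fun h => he.2 ?_⟩, hPsi⟩
    rw [← hPsi]
    exact (key _).mp h
end

section
/- For a reduced proper generalized Young wall Y whose image Ψ(Y) contains no δ^(k) symbols (equivalently, no row of Y in a position ≡ 0 mod n+1 has a number of boxes divisible by n+1 and positive), the number of distinct parts of the Kostant partition (φ∘Ψ)(Y) equals Σ_{j=1}^{n+1} #(S_j(Y) \ {0}), where S_j(Y) is the set of distinct row-lengths among rows of Y in positions ≡ j mod n+1. -/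
/-- S_j(Y) \ {0}: the set of distinct nonzero lengths of rows in positions ≡ j mod n+1. -/
def Sj (n : ℕ) (Y : ℕ →₀ ℕ) (j : ℕ) : Finset ℕ :=
  ((Y.support.filter (fun r => (r+1) % (n+1) = j % (n+1))).image Y).erase 0

/-- The single generator associated to a row of residue `j` with `N` boxes
(in the no-`dsym` situation). -/
def genFun (n : ℕ) (j : Fin (n+1)) (N : ℕ) : Gen n :=
  if hj : j.val = 0 then Gen.real (N/(n+1)) (Fin.last n) (N % (n+1))
  else if N % (n+1) = 0 then
    Gen.imag ⟨j.val - 1, by have := j.isLt; omega⟩ (N/(n+1))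
  else Gen.real (N/(n+1)) ⟨j.val - 1, by have := j.isLt; omega⟩ (N % (n+1))

/-- Decoder for `genFun`, used to prove injectivity. -/
def decGen (n : ℕ) : Gen n → Fin (n+1) × ℕ
  | Gen.imag i m => (⟨i.val + 1, by have := i.isLt; omega⟩, (n+1) * m)
  | Gen.real c i l =>
      (if h : i.val = n then 0 else ⟨i.val + 1, by have := i.isLt; omega⟩, (n+1) * c + l)
  | Gen.dsym _ => (0, 0)

lemma decGen_genFun (n : ℕ) (j : Fin (n+1)) (N : ℕ) :
    decGen n (genFun n j N) = (j, N) := by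
  have hj := j.isLt
  have hd : (n + 1) * (N / (n + 1)) + N % (n + 1) = N := Nat.div_add_mod N (n+1)
  unfold genFun
  split_ifs with a b
  · simp only [decGen, Prod.mk.injEq]
    split_ifs with c
    · exact ⟨Fin.ext (by simp [a]), hd⟩
    · exact absurd rfl c
  · simp only [decGen, Prod.mk.injEq]
    exact ⟨Fin.ext (show (↑j - 1 + 1 : ℕ) = ↑j by omega),
      Nat.mul_div_cancel' (Nat.dvd_of_mod_eq_zero b)⟩
  · simp only [decGen, Prod.mk.injEq]
    split_ifs with c
    · exact absurd (show (↑j - 1 : ℕ) = n from c) (by omega)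
    · exact ⟨Fin.ext (show (↑j - 1 + 1 : ℕ) = ↑j by omega), hd⟩

lemma genFun_ne_dsym (n : ℕ) (j : Fin (n+1)) (N m : ℕ) :
    genFun n j N ≠ Gen.dsym m := by
  unfold genFun; split_ifs <;> simp

lemma genFun_inj (n : ℕ) :
    Function.Injective (fun q : Fin (n+1) × ℕ => genFun n q.1 q.2) := by
  intro q1 q2 hq
  have h := congrArg (decGen n) hq
  simpa only [decGen_genFun, Prod.mk.eta] using h

theorem distinct_parts_no_dsym' (n : ℕ) (hn : 1 ≤ n) (Y : ℕ →₀ ℕ) (hY : IsYinf n Y)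
    (hno : ∀ r : ℕ, (r+1) % (n+1) = 0 → Y r % (n+1) = 0 → Y r = 0) :
    (unfoldExpr n (PsiMap n Y)).toFinset.card
      = ∑ j ∈ Finset.Icc 1 (n+1), (Sj n Y j).card := by
  classical
  set h : ℕ → Gen n := fun r => genFun n (resFin n r) (Y r) with hh
  -- Step 1: each row contributes a single non-dsym generator
  have hrow : ∀ r ∈ Y.support, rowPart n (resFin n r) (Y r) = {h r} := by
    intro r hr
    have hYr : Y r ≠ 0 := Finsupp.mem_support_iff.mp hr
    by_cases h0 : (r+1) % (n+1) = 0
    · have hmod : Y r % (n+1) ≠ 0 := fun hm => hYr (hno r h0 hm)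
      simp [rowPart, genFun, resFin, h0, hmod, hYr, hh]
    · simp only [rowPart, genFun, resFin, hh, hYr, if_neg hYr]
      split_ifs <;> simp_all <;> split_ifs <;> rfl
  have hpsi : PsiMap n Y = Y.support.val.map h := by
    rw [PsiMap]
    rw [Multiset.bind_congr hrow]
    simp [Multiset.bind_singleton]
  -- Step 2: unfolding does nothing
  have hunf : unfoldExpr n (PsiMap n Y) = PsiMap n Y := by
    rw [unfoldExpr]
    have : ∀ g ∈ PsiMap n Y,
        (fun g => match g with
          | Gen.dsym m => unfoldDelta n m
          | g => {g}) g = (fun g => ({g} : Multiset (Gen n))) g := by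
      intro g hg
      rw [hpsi] at hg
      obtain ⟨r, _, rfl⟩ := Multiset.mem_map.mp hg
      have := genFun_ne_dsym n (resFin n r) (Y r)
      cases hcase : h r with
        | imag j m => simp
        | real c i l => simp
        | dsym m => exact absurd hcase (this m)
    rw [Multiset.bind_congr this, Multiset.bind_singleton, Multiset.map_id']
  rw [hunf, hpsi]
  have himg : (Y.support.val.map h).toFinset = Y.support.image h := rfl
  rw [himg]
  -- Step 3: count via pairs (residue, length)
  set p : ℕ → Fin (n+1) × ℕ := fun r => (resFin n r, Y r) with hp
  have hG : Y.support.image h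
      = (Y.support.image p).image (fun q => genFun n q.1 q.2) := by
    rw [Finset.image_image]; rfl
  rw [hG, Finset.card_image_of_injective _ (genFun_inj n)]
  set P := Y.support.image p with hP
  rw [Finset.card_eq_sum_card_fiberwise
    (f := Prod.fst) (t := (Finset.univ : Finset (Fin (n+1))))
    (fun x _ => Finset.mem_univ _)]
  -- Step 4: fibers vs Sj
  have hfiber : ∀ i : Fin (n+1),
      (P.filter (fun q => q.1 = i)).card
        = ((Y.support.filter (fun r => (r+1) % (n+1) = i.val)).image Y).card := by
    intro i
    have : P.filter (fun q => q.1 = i)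
        = ((Y.support.filter (fun r => (r+1) % (n+1) = i.val)).image Y).image
            (fun N => (i, N)) := by
      ext ⟨i', N⟩
      simp only [hP, hp, Finset.mem_filter, Finset.mem_image, resFin, Fin.ext_iff,
        Prod.mk.injEq]
      constructor
      · rintro ⟨⟨r, hr, h1, h2⟩, h3⟩
        exact ⟨N, ⟨r, ⟨hr, by omega⟩, h2⟩, by omega, rfl⟩
      · rintro ⟨N', ⟨r, ⟨hr, h1⟩, h2⟩, h3, h4⟩
        exact ⟨⟨r, hr, by omega, by omega⟩, by omega⟩
    rw [this, Finset.card_image_of_injective]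
    intro a b hab
    simpa using hab
  have hSj : ∀ j : ℕ, Sj n Y j
      = (Y.support.filter (fun r => (r+1) % (n+1) = j % (n+1))).image Y := by
    intro j
    rw [Sj, Finset.erase_eq_of_notMem]
    intro h0
    obtain ⟨r, hr, hr0⟩ := Finset.mem_image.mp h0
    exact Finsupp.mem_support_iff.mp (Finset.mem_filter.mp hr).1 hr0
  -- Step 5: reindex the sum
  refine Finset.sum_nbij' (i := fun i : Fin (n+1) => if i.val = 0 then n+1 else i.val)
    (j := fun j : ℕ => (⟨j % (n+1), Nat.mod_lt _ (Nat.succ_pos n)⟩ : Fin (n+1)))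
    ?_ ?_ ?_ ?_ ?_
  · intro i _
    have := i.isLt
    by_cases hi : i.val = 0 <;> simp [hi, Finset.mem_Icc] <;> omega
  · intro j _; exact Finset.mem_univ _
  · intro i _
    have := i.isLt
    by_cases hi : i.val = 0 <;> simp [hi, Fin.ext_iff, Nat.mod_self] <;> omega
  · intro j hj
    simp only [Finset.mem_Icc] at hj
    show (if j % (n+1) = 0 then n+1 else j % (n+1)) = j
    by_cases hj0 : j % (n+1) = 0
    · rw [if_pos hj0]
      rcases Nat.lt_or_ge j (n+1) with hlt | hge
      · rw [Nat.mod_eq_of_lt hlt] at hj0; omega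
      · omega
    · have hlt : j < n+1 := by
        rcases Nat.lt_or_ge j (n+1) with hlt | hge
        · exact hlt
        · exfalso; have : j = n+1 := by omega
          rw [this, Nat.mod_self] at hj0; exact hj0 rfl
      rw [if_neg hj0, Nat.mod_eq_of_lt hlt]
  · intro i _
    rw [hfiber i, hSj]
    have hmod : ((fun i : Fin (n+1) => if (i : ℕ) = 0 then n+1 else (i : ℕ)) i) % (n+1)
        = i.val := by
      simp only
      split_ifs with hi
      · rw [Nat.mod_self]; exact hi.symm
      · exact Nat.mod_eq_of_lt i.isLt
    rw [hmod]

/-- Step 1 of Proposition 3.13: if Y is a reduced proper generalized Young wall such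
that no row of Y in a position ≡ 0 mod n+1 has a positive number of boxes divisible by
n+1 (equivalently, Ψ(Y) contains no δ^(k) symbol), then the number of distinct parts of
the Kostant partition (φ∘Ψ)(Y) equals Σ_{j=1}^{n+1} #(S_j(Y) \ {0}). -/
theorem distinct_parts_no_dsym (n : ℕ) (hn : 1 ≤ n) (Y : ℕ →₀ ℕ) (hY : IsYinf n Y)
    (hno : ∀ r : ℕ, (r+1) % (n+1) = 0 → Y r % (n+1) = 0 → Y r = 0) :
    (unfoldExpr n (PsiMap n Y)).toFinset.card
      = ∑ j ∈ Finset.Icc 1 (n+1), (Sj n Y j).card :=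
  distinct_parts_no_dsym' n hn Y hY hno
end

section
/- For each i ≥ 1, in the ring of formal power series in z with coefficients rational functions in q, the identity ∏_{j=1}^∞ (1 - q^{-i} z^j)/(1 - q^{-(i+1)} z^j) = Σ_{ρ ∈ P(1)} (1-q)^{N(ρ)} q^{-(i+1)M(ρ)} z^{|ρ|} holds, where for a partition ρ = (1^{m_1} 2^{m_2} ···): N(ρ) = #{r : m_r ≠ 0}, M(ρ) = m_1 + m_2 + ···, and |ρ| = m_1 + 2m_2 + 3m_3 + ···. -/
open PowerSeries

section Aux

variable {k : Type*} [Field k]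

lemma aux_inv_geom (b : k) {j : ℕ} (hj : 1 ≤ j) :
    (1 - PowerSeries.C b * PowerSeries.X ^ j)⁻¹
      = PowerSeries.mk (fun n => if j ∣ n then b ^ (n / j) else 0) := by
  have hj0 : j ≠ 0 := by omega
  have hc : constantCoeff (1 - PowerSeries.C b * PowerSeries.X ^ j) ≠ 0 := by
    simp [zero_pow hj0]
  rw [PowerSeries.inv_eq_iff_mul_eq_one hc]
  ext n
  rw [mul_sub, mul_one, show PowerSeries.mk (fun n => if j ∣ n then b ^ (n / j) else 0) *
      (PowerSeries.C b * PowerSeries.X ^ j)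
      = PowerSeries.C b * (PowerSeries.mk (fun n => if j ∣ n then b ^ (n / j) else 0)
        * PowerSeries.X ^ j) by ring]
  simp only [map_sub, coeff_mk, coeff_C_mul, coeff_mul_X_pow', coeff_one]
  rcases Nat.eq_zero_or_pos n with rfl | hn
  · have h1 : ¬ j ≤ 0 := by omega
    simp [h1]
  · have hn0 : ¬ (n = 0) := by omega
    by_cases hdvd : j ∣ n
    · obtain ⟨m, rfl⟩ := hdvd
      have hm : 1 ≤ m := by
        rcases Nat.eq_zero_or_pos m with rfl | h
        · simp at hn
        · exact h
      have hle : j ≤ j * m := Nat.le_mul_of_pos_right j hm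
      have hd1 : j ∣ j * m := ⟨m, rfl⟩
      have hd2 : j ∣ j * m - j := ⟨m - 1, by rw [Nat.mul_sub_left_distrib, mul_one]⟩
      have h1 : j * m / j = m := Nat.mul_div_cancel_left m (by omega)
      have h2 : (j * m - j) / j = m - 1 := by
        rw [show j * m - j = j * (m - 1) by rw [Nat.mul_sub_left_distrib, mul_one]]
        exact Nat.mul_div_cancel_left _ (by omega)
      simp only [if_pos hle, if_pos hd1, if_pos hd2, if_neg hn0, h1, h2]
      obtain ⟨m', rfl⟩ : ∃ m', m = m' + 1 := ⟨m - 1, by omega⟩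
      simp only [Nat.add_sub_cancel, pow_succ]
      ring
    · have hd2 : ∀ h : j ≤ n, ¬ j ∣ n - j := by
        intro h hd
        obtain ⟨c, hc'⟩ := hd
        exact hdvd ⟨c + 1, by rw [Nat.mul_add, ← hc', mul_one]; omega⟩
      by_cases hle : j ≤ n
      · simp only [if_pos hle, if_neg hdvd, if_neg (hd2 hle), if_neg hn0]
        ring
      · simp only [if_neg hle, if_neg hdvd, if_neg hn0]
        ring

lemma aux_coeff_factor (a b : k) {j : ℕ} (hj : 1 ≤ j) (n : ℕ) :
    PowerSeries.coeff n ((1 - PowerSeries.C a * PowerSeries.X ^ j) *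
        (1 - PowerSeries.C b * PowerSeries.X ^ j)⁻¹)
      = if n = 0 then 1 else if j ∣ n then (b - a) * b ^ (n / j - 1) else 0 := by
  rw [aux_inv_geom b hj, sub_mul, one_mul,
    show PowerSeries.C a * PowerSeries.X ^ j *
      PowerSeries.mk (fun n => if j ∣ n then b ^ (n / j) else 0)
      = PowerSeries.C a * (PowerSeries.mk (fun n => if j ∣ n then b ^ (n / j) else 0)
        * PowerSeries.X ^ j) by ring]
  simp only [map_sub, coeff_mk, coeff_C_mul, coeff_mul_X_pow']
  rcases Nat.eq_zero_or_pos n with rfl | hn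
  · have h1 : ¬ j ≤ 0 := by omega
    simp [h1]
  · have hn0 : ¬ (n = 0) := by omega
    by_cases hdvd : j ∣ n
    · obtain ⟨m, rfl⟩ := hdvd
      have hm : 1 ≤ m := by
        rcases Nat.eq_zero_or_pos m with rfl | h
        · simp at hn
        · exact h
      have hle : j ≤ j * m := Nat.le_mul_of_pos_right j hm
      have hd1 : j ∣ j * m := ⟨m, rfl⟩
      have hd2 : j ∣ j * m - j := ⟨m - 1, by rw [Nat.mul_sub_left_distrib, mul_one]⟩
      have h1 : j * m / j = m := Nat.mul_div_cancel_left m (by omega)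
      have h2 : (j * m - j) / j = m - 1 := by
        rw [show j * m - j = j * (m - 1) by rw [Nat.mul_sub_left_distrib, mul_one]]
        exact Nat.mul_div_cancel_left _ (by omega)
      simp only [if_pos hle, if_pos hd1, if_pos hd2, if_neg hn0, h1, h2]
      obtain ⟨m', rfl⟩ : ∃ m', m = m' + 1 := ⟨m - 1, by omega⟩
      simp only [Nat.add_sub_cancel, pow_succ]
      ring
    · have hd2 : ∀ h : j ≤ n, ¬ j ∣ n - j := by
        intro h hd
        obtain ⟨c, hc'⟩ := hd
        exact hdvd ⟨c + 1, by rw [Nat.mul_add, ← hc', mul_one]; omega⟩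
      by_cases hle : j ≤ n
      · simp only [if_pos hle, if_neg hdvd, if_neg (hd2 hle), if_neg hn0]
        ring
      · simp only [if_neg hle, if_neg hdvd, if_neg hn0]
        ring

end Aux

/-- The coefficient function appearing in the expansion of each factor. -/
noncomputable def cFun (q : RatFunc ℚ) (i j n : ℕ) : RatFunc ℚ :=
  if n = 0 then 1 else if j ∣ n then (1 - q) * q⁻¹ ^ ((i + 1) * (n / j)) else 0

/-- The finitely supported function associated to a partition: `j ↦ j * (count of j)`. -/
noncomputable def toL {d : ℕ} (ρ : Nat.Partition d) : ℕ →₀ ℕ :=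
  ⟨ρ.parts.toFinset, fun j => j * ρ.parts.count j, by
    intro j
    simp only [Multiset.mem_toFinset]
    constructor
    · intro hj
      exact Nat.mul_ne_zero (ρ.parts_pos hj).ne' (Multiset.count_ne_zero.2 hj)
    · intro h
      by_contra hj
      rw [Multiset.count_eq_zero_of_notMem hj, mul_zero] at h
      exact h rfl⟩

lemma toL_apply {d : ℕ} (ρ : Nat.Partition d) (j : ℕ) :
    toL ρ j = j * ρ.parts.count j := rfl

lemma toL_support {d : ℕ} (ρ : Nat.Partition d) :
    (toL ρ).support = ρ.parts.toFinset := rfl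

lemma parts_subset_Icc {d : ℕ} (ρ : Nat.Partition d) :
    ρ.parts.toFinset ⊆ Finset.Icc 1 d := by
  intro j hj
  rw [Multiset.mem_toFinset] at hj
  exact Finset.mem_Icc.2 ⟨ρ.parts_pos hj,
    (Multiset.le_sum_of_mem hj).trans_eq ρ.parts_sum⟩

/-- Proposition 4.3, single-factor version. For each i ≥ 1, in Q(q)[[z]],
∏_{j=1}^∞ (1 - q^{-i} z^j)/(1 - q^{-(i+1)} z^j)
  = Σ_{ρ ∈ P(1)} (1-q)^{N(ρ)} q^{-(i+1)M(ρ)} z^{|ρ|},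
stated z-adically: for every degree d the coefficient of z^d of the product of the
factors with 1 ≤ j ≤ d (the factors with j > d do not affect this coefficient) equals
the sum over partitions ρ of d of (1-q)^{N(ρ)} q^{-(i+1)M(ρ)}, where N(ρ) is the number
of distinct part sizes of ρ and M(ρ) its number of parts. -/
theorem correction_factor_single (i : ℕ) (hi : 1 ≤ i) (d : ℕ) :
    PowerSeries.coeff d
      (∏ j ∈ Finset.Icc 1 d,
        ((1 - PowerSeries.C ((RatFunc.X (K := ℚ))⁻¹ ^ i) * (PowerSeries.X) ^ j) *
          (1 - PowerSeries.C ((RatFunc.X (K := ℚ))⁻¹ ^ (i+1)) * (PowerSeries.X) ^ j)⁻¹))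
    = ∑ ρ : Nat.Partition d,
        (1 - RatFunc.X (K := ℚ)) ^ (ρ.parts.toFinset.card) *
          ((RatFunc.X (K := ℚ))⁻¹) ^ ((i+1) * Multiset.card ρ.parts) := by
  classical
  set q : RatFunc ℚ := RatFunc.X (K := ℚ) with hqdef
  have hq : q ≠ 0 := RatFunc.X_ne_zero
  -- Step 1: coefficient of each factor
  have hcoeff : ∀ j, 1 ≤ j → ∀ n,
      PowerSeries.coeff n
        ((1 - PowerSeries.C (q⁻¹ ^ i) * (PowerSeries.X) ^ j) *
          (1 - PowerSeries.C (q⁻¹ ^ (i+1)) * (PowerSeries.X) ^ j)⁻¹)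
      = cFun q i j n := by
    intro j hj n
    rw [aux_coeff_factor _ _ hj n, cFun]
    rcases eq_or_ne n 0 with rfl | hn
    · simp
    rw [if_neg hn, if_neg hn]
    by_cases hd : j ∣ n
    · rw [if_pos hd, if_pos hd]
      have hk : 1 ≤ n / j := Nat.one_le_div_iff (by omega) |>.2 (Nat.le_of_dvd (by omega) hd)
      have key : q⁻¹ ^ (i+1) - q⁻¹ ^ i = q⁻¹ ^ (i+1) * (1 - q) := by
        have h1 : q⁻¹ ^ (i+1) * q = q⁻¹ ^ i := by
          rw [pow_succ, mul_assoc, inv_mul_cancel₀ hq, mul_one]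
        rw [mul_sub, mul_one, h1]
      rw [key]
      obtain ⟨m', hm'⟩ : ∃ m', n / j = m' + 1 := ⟨n / j - 1, by omega⟩
      have hpow : q⁻¹ ^ ((i + 1) + (i + 1) * m') = q⁻¹ ^ (i + 1) * (q⁻¹ ^ (i + 1)) ^ m' := by
        rw [pow_add, pow_mul]
      rw [hm', Nat.add_sub_cancel,
        show (i+1) * (m' + 1) = (i + 1) + (i+1) * m' by ring, hpow]
      ring
    · rw [if_neg hd, if_neg hd]
  -- Step 2: expand the coefficient of the product
  rw [PowerSeries.coeff_prod]
  rw [Finset.sum_congr rfl (fun l _ => Finset.prod_congr rfl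
    (fun j hj => hcoeff j (Finset.mem_Icc.1 hj).1 (l j)))]
  -- Step 3: reindex by partitions
  symm
  apply Finset.sum_of_injOn toL
  · -- injectivity
    intro ρ _ σ _ h
    ext j
    rcases Nat.eq_zero_or_pos j with rfl | hj
    · rw [Multiset.count_eq_zero_of_notMem (fun hm => (ρ.parts_pos hm).false),
        Multiset.count_eq_zero_of_notMem (fun hm => (σ.parts_pos hm).false)]
    · have := DFunLike.congr_fun h j
      rw [toL_apply, toL_apply] at this
      exact Nat.eq_of_mul_eq_mul_left hj this
  · -- maps to the antidiagonal
    intro ρ _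
    simp only [Finset.coe_sort_coe, Finset.mem_coe, Finset.mem_finsuppAntidiag]
    constructor
    · rw [← Finset.sum_subset (parts_subset_Icc ρ) (fun j _ hj => by
        rw [toL_apply, Multiset.count_eq_zero_of_notMem
          (fun hm => hj (Multiset.mem_toFinset.2 hm)), mul_zero])]
      calc ∑ j ∈ ρ.parts.toFinset, toL ρ j
          = ∑ j ∈ ρ.parts.toFinset, ρ.parts.count j • j := by
            refine Finset.sum_congr rfl (fun j _ => ?_)
            rw [toL_apply, smul_eq_mul, mul_comm]
        _ = ρ.parts.sum := (Finset.sum_multiset_count ρ.parts).symm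
        _ = d := ρ.parts_sum
    · rw [toL_support]
      exact parts_subset_Icc ρ
  · -- terms outside the image vanish
    intro l hl hnot
    rw [Finset.mem_finsuppAntidiag] at hl
    by_contra h0
    have hdvd : ∀ j ∈ Finset.Icc 1 d, j ∣ l j := by
      intro j hj
      by_contra hd
      apply h0
      apply Finset.prod_eq_zero hj
      have hne : ¬ (l j = 0) := fun h => hd (h ▸ dvd_zero j)
      rw [cFun, if_neg hne, if_neg hd]
    refine hnot ?_
    have hpos : ∀ x ∈ ∑ j ∈ Finset.Icc 1 d, Multiset.replicate (l j / j) j, 0 < x := by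
      intro x hx
      rw [Multiset.mem_sum] at hx
      obtain ⟨j, hj, hx⟩ := hx
      rw [Multiset.eq_of_mem_replicate hx]
      exact (Finset.mem_Icc.1 hj).1
    refine ⟨⟨∑ j ∈ Finset.Icc 1 d, Multiset.replicate (l j / j) j, fun {x} hx => hpos x hx, ?_⟩,
      Finset.mem_coe.2 (Finset.mem_univ _), ?_⟩
    · rw [← Multiset.coe_sumAddMonoidHom, map_sum]
      rw [Finset.sum_congr rfl (fun j hj => ?_)]
      · exact hl.1
      · rw [Multiset.coe_sumAddMonoidHom, Multiset.sum_replicate, smul_eq_mul,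
          Nat.div_mul_cancel (hdvd j hj)]
    · -- toL of this partition is l
      ext j
      rw [toL_apply]
      simp only
      rw [Multiset.count_sum']
      by_cases hj : j ∈ Finset.Icc 1 d
      · rw [Finset.sum_eq_single j (fun j' _ hne => by
            rw [Multiset.count_replicate, if_neg hne])
          (fun h => absurd hj h)]
        rw [Multiset.count_replicate, if_pos rfl, Nat.mul_div_cancel' (hdvd j hj)]
      · have h1 : l j = 0 := by
          by_contra h
          exact hj (hl.2 (Finsupp.mem_support_iff.2 h))
        rw [h1, Finset.sum_eq_zero (fun j' hj' => by
          simp only [Multiset.count_replicate, ite_eq_right_iff]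
          intro he
          exact absurd (he ▸ hj') hj), mul_zero]
  · -- values agree
    intro ρ _
    rw [← Finset.prod_subset (parts_subset_Icc ρ) (fun j _ hj => by
      rw [toL_apply, Multiset.count_eq_zero_of_notMem
        (fun hm => hj (Multiset.mem_toFinset.2 hm)), mul_zero, cFun, if_pos rfl])]
    have hterm : ∀ j ∈ ρ.parts.toFinset,
        cFun q i j (toL ρ j) = (1 - q) * q⁻¹ ^ ((i + 1) * ρ.parts.count j) := by
      intro j hj
      rw [Multiset.mem_toFinset] at hj
      have hj0 : j ≠ 0 := (ρ.parts_pos hj).ne'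
      have hc0 : ρ.parts.count j ≠ 0 := Multiset.count_ne_zero.2 hj
      rw [toL_apply, cFun, if_neg (Nat.mul_ne_zero hj0 hc0),
        if_pos (Dvd.intro _ rfl), Nat.mul_div_cancel_left _ (Nat.pos_of_ne_zero hj0)]
    rw [Finset.prod_congr rfl hterm, Finset.prod_mul_distrib, Finset.prod_const,
      Finset.prod_pow_eq_pow_sum, ← Finset.mul_sum, Multiset.toFinset_sum_count_eq]
end

section
/- In the formal power series ring Q(q)[[z]], ∏_{i=1}^n ∏_{j=1}^∞ (1 - q^{-i} z^j)/(1 - q^{-(i+1)} z^j) = Σ_{ρ ∈ P(n)} (1-q)^{N(ρ)} q^{-M(ρ)} z^{|ρ|}, where for ρ = (ρ^(1),...,ρ^(n)): N(ρ) = Σ_{i=1}^n N(ρ^(i)) with N(ρ^(i)) the number of distinct part sizes of ρ^(i), M(ρ) = Σ_{i=1}^n (i+1)·(number of parts of ρ^(i)), and |ρ| = Σ_{i=1}^n |ρ^(i)|. -/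
open PowerSeries Finset

noncomputable section

namespace CF

variable {k : Type*} [Field k]

/-- The geometric series `(1 - b X^j)⁻¹` has coefficients `b^(m/j)` on multiples of `j`. -/
lemma geom (b : k) (j : ℕ) (hj : 0 < j) :
    (1 - PowerSeries.C b * X ^ j)⁻¹ =
      PowerSeries.mk (fun m => if j ∣ m then b ^ (m / j) else 0) := by
  rw [PowerSeries.inv_eq_iff_mul_eq_one]
  · ext m
    rw [mul_sub, mul_one, mul_comm _ (PowerSeries.C b * X ^ j), mul_assoc]
    rw [map_sub, coeff_C_mul, coeff_X_pow_mul', coeff_mk, coeff_one]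
    by_cases hm : m = 0
    · subst hm
      rw [if_pos (dvd_zero j), if_neg (by omega), if_pos rfl]
      simp
    · rw [if_neg hm]
      by_cases hdvd : j ∣ m
      · have hle : j ≤ m := Nat.le_of_dvd (Nat.pos_of_ne_zero hm) hdvd
        rw [if_pos hdvd, if_pos hle, coeff_mk, if_pos (Nat.dvd_sub hdvd dvd_rfl)]
        have h1 : 0 < m / j := Nat.div_pos hle hj
        have h2 : (m - j) / j = m / j - 1 := by
          obtain ⟨c, rfl⟩ := hdvd
          rw [Nat.mul_div_cancel_left _ hj, ← Nat.mul_sub_one, Nat.mul_div_cancel_left _ hj]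
        rw [h2]
        have h3 : b * b ^ (m / j - 1) = b ^ (m / j) := by
          rw [← pow_succ']
          congr 1
          omega
        rw [h3]
        ring
      · rw [if_neg hdvd]
        have h4 : (if j ≤ m then (coeff (R := k) (m - j))
            (PowerSeries.mk fun m => if j ∣ m then b ^ (m / j) else 0) else 0) = 0 := by
          split_ifs with hle
          · rw [coeff_mk, if_neg]
            intro hd
            have := Nat.sub_add_cancel hle
            exact hdvd (this ▸ Nat.dvd_add hd dvd_rfl)
          · rfl
        rw [h4, mul_zero, sub_zero]
  · simp [zero_pow hj.ne', hj.ne']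

/-- The factor `(1 - a X^j)(1 - b X^j)⁻¹` as an explicit power series. -/
lemma factor_eq (a b : k) (j : ℕ) (hj : 0 < j) :
    (1 - PowerSeries.C a * X ^ j) * (1 - PowerSeries.C b * X ^ j)⁻¹ =
      PowerSeries.mk (fun m => if j ∣ m then
        (if m / j = 0 then 1 else (b - a) * b ^ (m / j - 1)) else 0) := by
  rw [geom b j hj]
  ext m
  rw [sub_mul, one_mul, mul_assoc, map_sub, coeff_C_mul, coeff_X_pow_mul']
  simp only [coeff_mk]
  by_cases hm : m = 0
  · subst hm
    rw [if_neg (show ¬ j ≤ 0 by omega), if_pos (dvd_zero j), if_pos (dvd_zero j),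
      if_pos (Nat.zero_div j)]
    simp
  · by_cases hdvd : j ∣ m
    · have hle : j ≤ m := Nat.le_of_dvd (Nat.pos_of_ne_zero hm) hdvd
      have h1 : 0 < m / j := Nat.div_pos hle hj
      rw [if_pos hle, if_pos (Nat.dvd_sub hdvd dvd_rfl), if_pos hdvd, if_pos hdvd,
        if_neg h1.ne']
      have h2 : (m - j) / j = m / j - 1 := by
        obtain ⟨c, rfl⟩ := hdvd
        rw [Nat.mul_div_cancel_left _ hj, ← Nat.mul_sub_one, Nat.mul_div_cancel_left _ hj]
      have h3 : b ^ (m / j) = b * b ^ (m / j - 1) := by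
        rw [← pow_succ']
        congr 1
        omega
      rw [h2, h3]
      ring
    · rw [if_neg hdvd, if_neg hdvd]
      have h4 : (if j ≤ m then (if j ∣ m - j then b ^ ((m - j) / j) else 0) else 0) = 0 := by
        split_ifs with hle hd
        · exact absurd ((Nat.sub_add_cancel hle) ▸ Nat.dvd_add hd dvd_rfl) hdvd
        · rfl
        · rfl
      rw [h4, mul_zero, sub_zero]

/-- The finsupp attached to a partition, recording `j ↦ (count of j) * j`. -/
def partFinsupp {m : ℕ} (p : Nat.Partition m) : ℕ →₀ ℕ :=
  ⟨p.parts.toFinset, fun j => p.parts.count j * j, by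
    intro j
    simp only [Multiset.mem_toFinset, ne_eq, Nat.mul_eq_zero, not_or]
    constructor
    · intro h
      exact ⟨by simpa [Multiset.count_eq_zero] using h, (p.parts_pos h).ne'⟩
    · rintro ⟨h1, _⟩
      simpa [Multiset.count_eq_zero] using h1⟩

lemma partFinsupp_apply {m : ℕ} (p : Nat.Partition m) (j : ℕ) :
    partFinsupp p j = p.parts.count j * j := rfl

lemma partFinsupp_support {m : ℕ} (p : Nat.Partition m) :
    (partFinsupp p).support = p.parts.toFinset := rfl

/-- The weighted generating-function identity: the coefficient of `z^m` in a product over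
part sizes `1 ≤ j ≤ d` of series supported on multiples of `j` with weights `w j k` is a sum
over the partitions of `m`. -/
lemma coeff_prod_partitions {α : Type*} [CommSemiring α] (w : ℕ → ℕ → α)
    (hw : ∀ j, w j 0 = 1) (m d : ℕ) (hmd : m ≤ d) :
    PowerSeries.coeff (R := α) m
        (∏ j ∈ Icc 1 d, PowerSeries.mk fun t => if j ∣ t then w j (t / j) else 0)
      = ∑ p : Nat.Partition m, ∏ j ∈ p.parts.toFinset, w j (p.parts.count j) := by
  classical
  rw [coeff_prod]
  simp only [coeff_mk]
  rw [← Finset.sum_filter_of_ne (p := fun l : ℕ →₀ ℕ => ∀ j ∈ Icc 1 d, j ∣ l j)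
    (fun l _ hne j hj => by
      by_contra hd
      exact hne (Finset.prod_eq_zero hj (if_neg hd)))]
  symm
  have hsub : ∀ p : Nat.Partition m, p.parts.toFinset ⊆ Icc 1 d := by
    intro p j hj
    rw [Multiset.mem_toFinset] at hj
    rw [mem_Icc]
    exact ⟨p.parts_pos hj, le_trans (p.parts_sum ▸ Multiset.le_sum_of_mem hj) hmd⟩
  refine Finset.sum_bij (fun p _ => partFinsupp p) ?_ ?_ ?_ ?_
  · -- membership
    intro p _
    rw [mem_filter, mem_finsuppAntidiag]
    refine ⟨⟨?_, ?_⟩, fun j _ => dvd_mul_left j _⟩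
    · show ∑ j ∈ Icc 1 d, p.parts.count j * j = m
      rw [← Finset.sum_subset (hsub p) (fun j _ hj => by
        rw [Multiset.count_eq_zero_of_notMem (fun h => hj (Multiset.mem_toFinset.mpr h)),
          zero_mul])]
      have h := Finset.sum_multiset_map_count p.parts id
      simp only [smul_eq_mul] at h
      calc ∑ j ∈ p.parts.toFinset, p.parts.count j * j = (p.parts.map (fun x => x)).sum := h.symm
        _ = p.parts.sum := by rw [Multiset.map_id']
        _ = m := p.parts_sum
    · show (partFinsupp p).support ⊆ Icc 1 d
      rw [partFinsupp_support]
      exact hsub p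
  · -- injective
    intro p₁ h₁ p₂ h₂ he
    ext1
    ext j
    by_cases hj : j = 0
    · subst hj
      rw [Multiset.count_eq_zero_of_notMem (fun h => (p₁.parts_pos h).ne' rfl),
        Multiset.count_eq_zero_of_notMem (fun h => (p₂.parts_pos h).ne' rfl)]
    · have := DFunLike.congr_fun he j
      rw [partFinsupp_apply, partFinsupp_apply] at this
      exact Nat.eq_of_mul_eq_mul_right (Nat.pos_of_ne_zero hj) this
  · -- surjective
    intro f hf
    rw [mem_filter, mem_finsuppAntidiag] at hf
    obtain ⟨⟨hsum, hsupp⟩, hdvd⟩ := hf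
    have hpos : ∀ i ∈ ∑ j ∈ f.support, Multiset.replicate (f j / j) j, 0 < i := by
      intro i hi
      rw [Multiset.mem_sum] at hi
      obtain ⟨j, hj, hij⟩ := hi
      rw [Multiset.eq_of_mem_replicate hij]
      exact (mem_Icc.mp (hsupp hj)).1
    have hs : (∑ j ∈ f.support, Multiset.replicate (f j / j) j).sum = m := by
      rw [Multiset.sum_sum]
      have h2 : ∀ j ∈ f.support, (Multiset.replicate (f j / j) j).sum = f j := by
        intro j hj
        rw [Multiset.sum_replicate, smul_eq_mul, Nat.div_mul_cancel (hdvd j (hsupp hj))]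
      rw [Finset.sum_congr rfl h2, Finset.sum_subset hsupp
        (fun j _ hj => Finsupp.notMem_support_iff.mp hj), hsum]
    refine ⟨⟨_, fun {i} hi => hpos i hi, hs⟩, mem_univ _, ?_⟩
    ext j
    rw [partFinsupp_apply]
    show (Multiset.count j (∑ i ∈ f.support, Multiset.replicate (f i / i) i)) * j = f j
    rw [Multiset.count_sum']
    by_cases hj : j ∈ f.support
    · rw [Finset.sum_eq_single j
        (fun i _ hij => by rw [Multiset.count_replicate, if_neg hij])
        (fun h => absurd hj h), Multiset.count_replicate_self,
        Nat.div_mul_cancel (hdvd j (hsupp hj))]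
    · rw [Finset.sum_eq_zero, zero_mul]
      · exact (Finsupp.notMem_support_iff.mp hj).symm
      · intro i hi
        rw [Multiset.count_replicate, if_neg (fun h : i = j => hj (h ▸ hi))]
  · -- values agree
    intro p _
    have h1 : ∀ j, (if j ∣ partFinsupp p j then w j (partFinsupp p j / j) else 0)
        = w j (p.parts.count j) := by
      intro j
      rw [partFinsupp_apply]
      by_cases hj : j = 0
      · subst hj
        rw [mul_zero, if_pos (dvd_refl 0), Nat.zero_div, hw,
          Multiset.count_eq_zero_of_notMem (fun h => (p.parts_pos h).ne' rfl), hw]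
      · rw [if_pos (dvd_mul_left j _), Nat.mul_div_cancel _ (Nat.pos_of_ne_zero hj)]
    calc ∏ j ∈ p.parts.toFinset, w j (p.parts.count j)
        = ∏ j ∈ Icc 1 d, w j (p.parts.count j) :=
          Finset.prod_subset (hsub p) (fun j _ hj => by
            rw [Multiset.count_eq_zero_of_notMem (fun h => hj (Multiset.mem_toFinset.mpr h)), hw])
      _ = ∏ j ∈ Icc 1 d, (if j ∣ partFinsupp p j then w j (partFinsupp p j / j) else 0) :=
          Finset.prod_congr rfl (fun j _ => (h1 j).symm)

abbrev K := RatFunc ℚ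

/-- The coefficient of `z^m` for a single index `i = e`. -/
lemma per_i (e d m : ℕ) (hmd : m ≤ d) :
    PowerSeries.coeff (R := K) m (∏ j ∈ Icc 1 d,
      ((1 - PowerSeries.C (R := K) ((RatFunc.X (K := ℚ))⁻¹ ^ e) * X ^ j) *
        (1 - PowerSeries.C (R := K) ((RatFunc.X (K := ℚ))⁻¹ ^ (e+1)) * X ^ j)⁻¹))
    = ∑ p : Nat.Partition m,
        (1 - RatFunc.X (K := ℚ)) ^ p.parts.toFinset.card *
          ((RatFunc.X (K := ℚ))⁻¹) ^ ((e+1) * Multiset.card p.parts) := by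
  set q : K := RatFunc.X (K := ℚ) with hq
  set a : K := q⁻¹ ^ e
  set b : K := q⁻¹ ^ (e+1)
  have hX : q ≠ 0 := RatFunc.X_ne_zero
  have key : b - a = (1 - q) * b := by
    have h0 : a = q * b := by
      show q⁻¹ ^ e = q * q⁻¹ ^ (e+1)
      rw [pow_succ, ← mul_assoc, mul_comm q, mul_assoc, mul_inv_cancel₀ hX, mul_one]
    rw [sub_mul, one_mul, h0]
  have hfac : ∀ j ∈ Icc 1 d, (1 - PowerSeries.C (R := K) a * X ^ j) *
      (1 - PowerSeries.C (R := K) b * X ^ j)⁻¹ =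
      PowerSeries.mk fun t => if j ∣ t then
        (fun (_ : ℕ) (c : ℕ) => if c = 0 then (1:K) else (b - a) * b ^ (c - 1)) j (t / j)
        else 0 := by
    intro j hj
    exact factor_eq a b j (mem_Icc.mp hj).1
  rw [Finset.prod_congr rfl hfac,
    coeff_prod_partitions (fun _ c => if c = 0 then (1:K) else (b - a) * b ^ (c - 1))
      (fun _ => rfl) m d hmd]
  refine Finset.sum_congr rfl fun p _ => ?_
  have h2 : ∀ j ∈ p.parts.toFinset,
      (if p.parts.count j = 0 then (1:K) else (b - a) * b ^ (p.parts.count j - 1))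
        = (1 - q) * b ^ (p.parts.count j) := by
    intro j hj
    have hc : p.parts.count j ≠ 0 := by
      simpa [Multiset.count_eq_zero] using Multiset.mem_toFinset.mp hj
    rw [if_neg hc, key, mul_assoc]
    congr 1
    rw [← pow_succ']
    congr 1
    omega
  rw [Finset.prod_congr rfl h2, Finset.prod_mul_distrib, Finset.prod_const,
    Finset.prod_pow_eq_pow_sum, Multiset.toFinset_sum_count_eq, ← pow_mul]

end CF

end

/-- Proposition 4.3 (the correction factor as a sum over multi-partitions): in
Q(q)[[z]],
∏_{i=1}^n ∏_{j=1}^∞ (1 - q^{-i} z^j)/(1 - q^{-(i+1)} z^j)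
  = Σ_{ρ ∈ P(n)} (1-q)^{N(ρ)} q^{-M(ρ)} z^{|ρ|},
stated z-adically: for every degree d, the coefficient of z^d in the product of the
factors with 1 ≤ j ≤ d equals the sum over n-tuples of partitions of total size d of
(1-q)^{Σ_i N(ρ^(i))} q^{-Σ_i (i+1)·(number of parts of ρ^(i))}, organized by the
composition (|ρ^(1)|, ..., |ρ^(n)|) of d. Here the index i ∈ {1,...,n} corresponds to
`i' : Fin n` via i = i'.val + 1, so i+1 = i'.val + 2. -/
theorem correction_factor (n : ℕ) (hn : 1 ≤ n) (d : ℕ) :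
    PowerSeries.coeff (R := RatFunc ℚ) d
      (∏ i ∈ Finset.Icc 1 n, ∏ j ∈ Finset.Icc 1 d,
        ((1 - PowerSeries.C (R := RatFunc ℚ) ((RatFunc.X (K := ℚ))⁻¹ ^ i) * (PowerSeries.X) ^ j) *
          (1 - PowerSeries.C (R := RatFunc ℚ) ((RatFunc.X (K := ℚ))⁻¹ ^ (i+1)) * (PowerSeries.X) ^ j)⁻¹))
    = ∑ c ∈ Finset.Nat.antidiagonalTuple n d, ∏ i : Fin n,
        ∑ ρ : Nat.Partition (c i),
          (1 - RatFunc.X (K := ℚ)) ^ (ρ.parts.toFinset.card) *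
            ((RatFunc.X (K := ℚ))⁻¹) ^ ((i.val + 2) * Multiset.card ρ.parts) := by
  classical
  have step1 : (∏ i ∈ Finset.Icc 1 n, ∏ j ∈ Finset.Icc 1 d,
        ((1 - PowerSeries.C (R := RatFunc ℚ) ((RatFunc.X (K := ℚ))⁻¹ ^ i) * (PowerSeries.X) ^ j) *
          (1 - PowerSeries.C (R := RatFunc ℚ) ((RatFunc.X (K := ℚ))⁻¹ ^ (i+1)) * (PowerSeries.X) ^ j)⁻¹))
      = ∏ i' : Fin n, ∏ j ∈ Finset.Icc 1 d,
        ((1 - PowerSeries.C (R := RatFunc ℚ) ((RatFunc.X (K := ℚ))⁻¹ ^ (i'.val + 1)) *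
            (PowerSeries.X) ^ j) *
          (1 - PowerSeries.C (R := RatFunc ℚ) ((RatFunc.X (K := ℚ))⁻¹ ^ (i'.val + 1 + 1)) *
            (PowerSeries.X) ^ j)⁻¹) := by
    refine Finset.prod_bij (fun a ha => (⟨a - 1, by
        have := Finset.mem_Icc.mp ha; omega⟩ : Fin n)) (fun a ha => Finset.mem_univ _)
      ?_ ?_ ?_
    · intro a₁ h₁ a₂ h₂ he
      have e1 := Finset.mem_Icc.mp h₁
      have e2 := Finset.mem_Icc.mp h₂
      simp only [Fin.mk.injEq] at he
      omega
    · intro b _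
      refine ⟨b.val + 1, Finset.mem_Icc.mpr ⟨by omega, by omega⟩, ?_⟩
      ext
      simp
    · intro a ha
      have e1 := Finset.mem_Icc.mp ha
      have : a - 1 + 1 = a := by omega
      simp only [this]
  rw [step1, PowerSeries.coeff_prod]
  refine Finset.sum_nbij' (i := fun l => ⇑l) (j := fun c => Finsupp.equivFunOnFinite.symm c)
    ?_ ?_ ?_ ?_ ?_
  · intro l hl
    rw [Finset.mem_finsuppAntidiag] at hl
    rw [Finset.Nat.mem_antidiagonalTuple]
    exact hl.1
  · intro c hc
    rw [Finset.Nat.mem_antidiagonalTuple] at hc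
    rw [Finset.mem_finsuppAntidiag]
    refine ⟨?_, Finset.subset_univ _⟩
    rw [← hc]
    exact Finset.sum_congr rfl fun i _ => by simp
  · intro l _
    exact Finsupp.equivFunOnFinite_symm_coe l
  · intro c _
    exact Equiv.apply_symm_apply Finsupp.equivFunOnFinite c
  · intro l hl
    rw [Finset.mem_finsuppAntidiag] at hl
    refine Finset.prod_congr rfl fun i _ => ?_
    have hle : l i ≤ d := by
      rw [← hl.1]
      exact Finset.single_le_sum (fun i _ => Nat.zero_le _) (Finset.mem_univ i)
    exact CF.per_i (i.val + 1) d (l i) hle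
end
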